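/- arXiv:math/0403337 — 6 statements merged into one kernel-verified Lean document; each statement's English description precedes it below -/
import Mathlib

section
/- Let m ≥ 0 and r ≥ 1 be integers and let (N_1,…,N_r), with N_i = [l_i, g_i] ⊆ {1,…,m+r}, be a lattice path presentation. A set B ⊆ {1,…,m+r} is a maximal partial transversal of (N_1,…,N_r) (i.e., a basis of the lattice path matroid M[N]) if and only if |B| = r and, writing B = {b_1 < b_2 < ⋯ < b_r}, one has b_i ∈ N_i for every i with 1 ≤ i ≤ r. -/
open Set
open scoped Matroid

namespace LPM

variable {α β : Type*}

/-- `I` is a partial transversal of the set family `N`: there is an injection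
matching each element of `I` to an index of a member of the family containing it. -/
def IsPT {ι : Type*} (N : ι → Set α) (I : Set α) : Prop :=
  ∃ f : I → ι, Function.Injective f ∧ ∀ x : I, (x : α) ∈ N (f x)

/-- `I` is a (full) transversal of the set family `N`: there is a bijection
matching each element of `I` to an index of a member of the family containing it. -/
def IsT {ι : Type*} (N : ι → Set α) (I : Set α) : Prop :=
  ∃ f : I → ι, Function.Bijective f ∧ ∀ x : I, (x : α) ∈ N (f x)

/-- A lattice path presentation with nullity `m` and rank `r`: a sequence of
intervals `[l i, g i] ⊆ {1, …, m + r}` whose left endpoints strictly increase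
and whose right endpoints strictly increase. -/
structure LPP (m r : ℕ) where
  l : Fin r → ℕ
  g : Fin r → ℕ
  l_strictMono : StrictMono l
  g_strictMono : StrictMono g
  one_le_l : ∀ i, 1 ≤ l i
  l_le_g : ∀ i, l i ≤ g i
  g_le : ∀ i, g i ≤ m + r

/-- The intervals of a lattice path presentation. -/
def LPP.N {m r : ℕ} (P : LPP m r) (i : Fin r) : Set ℕ := Set.Icc (P.l i) (P.g i)

/-- `M` is the lattice path matroid `M[N]` of the presentation `P`: the ground set
is `{1, …, m + r}` and the independent sets are exactly the partial transversals
of the intervals of `P`. -/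
def IsLPMOf {m r : ℕ} (P : LPP m r) (M : Matroid ℕ) : Prop :=
  M.E = Set.Icc 1 (m + r) ∧
    ∀ I : Set ℕ, M.Indep I ↔ I ⊆ Set.Icc 1 (m + r) ∧ IsPT P.N I

/-- `M` is isomorphic to `M'`: there is a bijection between the ground sets
carrying independent sets to independent sets in both directions. -/
def IsoTo (M : Matroid α) (M' : Matroid β) : Prop :=
  ∃ f : α → β, Set.BijOn f M.E M'.E ∧ ∀ I ⊆ M.E, (M.Indep I ↔ M'.Indep (f '' I))

/-- A lattice path matroid: a matroid isomorphic to `M[N]` for some lattice path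
presentation (presentations with `r = 0` give the rank-zero matroids). -/
def IsLPMatroid (M : Matroid α) : Prop :=
  ∃ (m r : ℕ) (P : LPP m r) (M₀ : Matroid ℕ), IsLPMOf P M₀ ∧ IsoTo M M₀

/-- A circuit of a matroid: a minimal dependent subset of the ground set. -/
def Circuit (M : Matroid α) (C : Set α) : Prop :=
  C ⊆ M.E ∧ ¬ M.Indep C ∧ ∀ D : Set α, D ⊂ C → M.Indep D

/-- A matroid is connected if every two distinct elements of the ground set lie
in a common circuit. -/
def Connected (M : Matroid α) : Prop :=
  ∀ x ∈ M.E, ∀ y ∈ M.E, x ≠ y → ∃ C, Circuit M C ∧ x ∈ C ∧ y ∈ C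

/-- The rank of a set in a matroid: the supremum of the cardinalities of its
independent subsets. -/
noncomputable def rk (M : Matroid α) (X : Set α) : ℕ :=
  sSup {n | ∃ I, I ⊆ X ∧ M.Indep I ∧ I.ncard = n}

/-- A nontrivial connected flat: a flat that is dependent and whose restriction
is a connected matroid. -/
def NTConnFlat (M : Matroid α) (X : Set α) : Prop :=
  M.IsFlat X ∧ ¬ M.Indep X ∧ Connected (M ↾ X)

/-- Deletion of a set from a matroid. -/
def delete (M : Matroid α) (D : Set α) : Matroid α := M ↾ (M.E \ D)

/-- Contraction of a set in a matroid, defined via duality. -/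
def contract (M : Matroid α) (C : Set α) : Matroid α := (delete M✶ C)✶

/-- `Minor M' M` means that `M'` is obtained from `M` by a sequence of deletions
and contractions. -/
inductive Minor : Matroid α → Matroid α → Prop
  | refl (M : Matroid α) : Minor M M
  | del {M' M : Matroid α} (D : Set α) (h : Minor M' M) : Minor (delete M' D) M
  | con {M' M : Matroid α} (C : Set α) (h : Minor M' M) : Minor (contract M' C) M

end LPM


open LPM

private lemma pt_card {m r : ℕ} {P : LPP m r} {I : Set ℕ} (h : IsPT P.N I) :
    I.Finite ∧ I.ncard ≤ r := by
  obtain ⟨f, hf, -⟩ := h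
  have hfin : Finite I := Finite.of_injective f hf
  refine ⟨Set.toFinite I, ?_⟩
  have := Nat.card_le_card_of_injective f hf
  simpa [Nat.card_coe_set_eq] using this

private lemma perm_ge {r : ℕ} {σ : Fin r → Fin r} (hσ : Function.Injective σ)
    (i : Fin r) : ∃ t, t ≤ i ∧ i ≤ σ t := by
  by_contra h
  push_neg at h
  have hmap : ∀ t ∈ Finset.Iic i, σ t ∈ Finset.Iio i := by
    intro t ht
    exact Finset.mem_Iio.mpr (h t (Finset.mem_Iic.mp ht))
  have := Finset.card_le_card_of_injOn σ hmap hσ.injOn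
  rw [Fin.card_Iic, Fin.card_Iio] at this
  omega

private lemma perm_le {r : ℕ} {σ : Fin r → Fin r} (hσ : Function.Injective σ)
    (i : Fin r) : ∃ t, i ≤ t ∧ σ t ≤ i := by
  have hτ : Function.Injective (fun t : Fin r => (σ t.rev).rev) := by
    intro a b hab
    exact Fin.rev_injective (hσ (Fin.rev_injective hab))
  obtain ⟨t, ht1, ht2⟩ := perm_ge hτ i.rev
  refine ⟨t.rev, ?_, ?_⟩
  · rw [← Fin.rev_rev i]; exact Fin.rev_le_rev.mpr ht1
  · have : (σ t.rev).rev.rev ≤ i.rev.rev := Fin.rev_le_rev.mpr ht2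
    simpa using this

private lemma mem_N_of_inj {m r : ℕ} (P : LPP m r) {B : Set ℕ} {b : Fin r → ℕ}
    (hb : StrictMono b) (hB : B = Set.range b)
    (f : B → Fin r) (hfinj : Function.Injective f)
    (hfmem : ∀ x : B, (x : ℕ) ∈ P.N (f x)) (i : Fin r) : b i ∈ P.N i := by
  set σ : Fin r → Fin r := fun j => f ⟨b j, hB ▸ Set.mem_range_self j⟩ with hσdef
  have hσ : Function.Injective σ := by
    intro a c h
    have := congrArg Subtype.val (hfinj h)
    exact hb.injective this
  have hmem : ∀ j, b j ∈ Set.Icc (P.l (σ j)) (P.g (σ j)) := fun j => hfmem _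
  obtain ⟨t, ht, hti⟩ := perm_ge hσ i
  obtain ⟨s, hs, hsi⟩ := perm_le hσ i
  refine Set.mem_Icc.mpr ⟨?_, ?_⟩
  · calc P.l i ≤ P.l (σ t) := P.l_strictMono.monotone hti
      _ ≤ b t := (hmem t).1
      _ ≤ b i := hb.monotone ht
  · calc b i ≤ b s := hb.monotone hs
      _ ≤ P.g (σ s) := (hmem s).2
      _ ≤ P.g i := P.g_strictMono.monotone hsi

private lemma indep_range_l {m r : ℕ} (P : LPP m r) (M : Matroid ℕ)
    (hM : IsLPMOf P M) : M.Indep (Set.range P.l) ∧ (Set.range P.l).ncard = r := by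
  have hinj := P.l_strictMono.injective
  constructor
  · rw [(hM.2 _)]
    constructor
    · rintro x ⟨j, rfl⟩
      exact ⟨P.one_le_l j, le_trans (P.l_le_g j) (P.g_le j)⟩
    · refine ⟨fun x => Classical.choose x.2, ?_, ?_⟩
      · intro x y hxy
        have hx := Classical.choose_spec x.2
        have hy := Classical.choose_spec y.2
        exact Subtype.ext (by rw [← hx, ← hy]; exact congrArg P.l hxy)
      · intro x
        have hx := Classical.choose_spec x.2
        refine Set.mem_Icc.mpr ⟨?_, ?_⟩
        · rw [← hx]
        · rw [← hx]; exact P.l_le_g _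
  · rw [← Set.image_univ, Set.ncard_image_of_injective _ hinj, Set.ncard_univ]
    simp


open LPM in
/-- For a lattice path presentation `P` with `m ≥ 0`, `r ≥ 1`,
a set `B ⊆ {1,…,m+r}` is a basis of the lattice path matroid `M[N]` iff
`|B| = r` and, writing `B = {b 0 < b 1 < ⋯}`, `b i ∈ N i` for every `i`. -/
theorem stmt0 {m r : ℕ} (hr : 1 ≤ r) (P : LPP m r) (M : Matroid ℕ)
    (hM : IsLPMOf P M) (B : Set ℕ) :
    M.IsBase B ↔
      (B.ncard = r ∧
        ∀ b : Fin r → ℕ, StrictMono b → B = Set.range b → ∀ i : Fin r, b i ∈ P.N i) := by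
  have hIcard : ∀ I, M.Indep I → I.Finite ∧ I.ncard ≤ r := fun I hI =>
    pt_card ((hM.2 I).mp hI).2
  constructor
  · intro hB
    have hBi := hB.indep
    have hBcard : B.ncard = r := by
      obtain ⟨hL, hLcard⟩ := indep_range_l P M hM
      obtain ⟨B₂, hB₂, hLB₂⟩ := hL.exists_isBase_superset
      have h2 := hIcard _ hB₂.indep
      have hge : r ≤ B₂.ncard := hLcard ▸ Set.ncard_le_ncard hLB₂ h2.1
      rw [hB.ncard_eq_ncard_of_isBase hB₂, le_antisymm h2.2 hge]
    refine ⟨hBcard, ?_⟩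
    intro b hb hBr i
    obtain ⟨f, hfinj, hfmem⟩ := ((hM.2 B).mp hBi).2
    exact mem_N_of_inj P hb hBr f hfinj hfmem i
  · rintro ⟨hBcard, hall⟩
    have hBfin : B.Finite := by
      by_contra h
      have : B.ncard = 0 := Set.Infinite.ncard h
      omega
    have hscard : hBfin.toFinset.card = r := by
      rw [Set.ncard_eq_toFinset_card _ hBfin] at hBcard; exact hBcard
    set e := hBfin.toFinset.orderIsoOfFin hscard with he
    set b : Fin r → ℕ := fun i => (e i : ℕ) with hbdef
    have hb : StrictMono b := fun i j h => Subtype.coe_lt_coe.mpr (e.strictMono h)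
    have hrange : B = Set.range b := by
      ext x
      simp only [Set.mem_range]
      constructor
      · intro hx
        refine ⟨e.symm ⟨x, hBfin.mem_toFinset.mpr hx⟩, ?_⟩
        show ((e (e.symm ⟨x, _⟩)) : ℕ) = x
        rw [e.apply_symm_apply]
      · rintro ⟨i, rfl⟩
        exact hBfin.mem_toFinset.mp (e i).2
    have hN : ∀ i, b i ∈ P.N i := hall b hb hrange
    have hindep : M.Indep B := by
      rw [hM.2 B]
      constructor
      · intro x hx
        obtain ⟨i, rfl⟩ := hrange ▸ hx
        exact ⟨le_trans (P.one_le_l i) (hN i).1, le_trans (hN i).2 (P.g_le i)⟩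
      · refine ⟨fun x => e.symm ⟨x.1, hBfin.mem_toFinset.mpr x.2⟩, ?_, ?_⟩
        · intro x y hxy
          have := congrArg (fun z => ((e z : ℕ))) hxy
          simp only [e.apply_symm_apply] at this
          exact Subtype.ext this
        · intro x
          have hx : b (e.symm ⟨x.1, hBfin.mem_toFinset.mpr x.2⟩) = (x : ℕ) := by
            show ((e (e.symm _)) : ℕ) = _
            rw [e.apply_symm_apply]
          exact hx ▸ hN _
    rw [Matroid.isBase_iff_maximal_indep]
    refine ⟨hindep, ?_⟩
    intro I hI hBI
    have h2 := hIcard I hI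
    exact (Set.eq_of_subset_of_ncard_le hBI (le_of_le_of_eq h2.2 hBcard.symm) h2.1).symm.subset
end

section
/- Let (D_1,…,D_k) be a finite family of subsets of a finite set E, let M be the transversal matroid on E presented by this family (independent sets are the partial transversals), and let r be the rank of M. Suppose some basis B of M is a transversal of the subfamily (D_{i_1},…,D_{i_r}) with i_1 < i_2 < ⋯ < i_r, i.e., there is a bijection f : B → {i_1,…,i_r} with x ∈ D_{f(x)} for all x ∈ B. Then the subfamily presents the same matroid: a subset of E is a partial transversal of (D_1,…,D_k) if and only if it is a partial transversal of (D_{i_1},…,D_{i_r}). -/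
open Set
open scoped Matroid

open LPM in
/-- If a basis `B` of the transversal matroid presented by
`(D 0, …, D (k-1))` is a transversal of the subfamily indexed by the strictly
increasing `ι : Fin r → Fin k`, where `r` is the rank of the matroid, then the
subfamily presents the same matroid: a subset of `E` is a partial transversal of
the whole family iff it is one of the subfamily. -/
theorem stmt1 {α : Type*} {k : ℕ} (E : Set α) (hEfin : E.Finite)
    (D : Fin k → Set α) (hDE : ∀ i, D i ⊆ E)
    (M : Matroid α) (hME : M.E = E)
    (hMI : ∀ I : Set α, M.Indep I ↔ I ⊆ E ∧ IsPT D I)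
    (r : ℕ) (hr : rk M M.E = r)
    (B : Set α) (hB : M.IsBase B)
    (ι : Fin r → Fin k) (hι : StrictMono ι)
    (hBT : IsT (fun j => D (ι j)) B) :
    ∀ I : Set α, I ⊆ E → (IsPT D I ↔ IsPT (fun j => D (ι j)) I) := by
  classical
  have hindep_le : ∀ S : Set α, M.Indep S → S.ncard ≤ r := by
    intro S hS
    rw [← hr]
    refine le_csSup ⟨E.ncard, ?_⟩ ⟨S, hS.subset_ground, hS, rfl⟩
    rintro n ⟨T, hTX, hTind, rfl⟩
    exact Set.ncard_le_ncard (hME ▸ hTX) hEfin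
  intro I hIE
  constructor
  · rintro ⟨f, hfinj, hfmem⟩
    obtain ⟨h, hhbij, hhmem⟩ := hBT
    have hBE : B ⊆ E := hME ▸ hB.subset_ground
    have hIfin : I.Finite := hEfin.subset hIE
    have hBfin : B.Finite := hEfin.subset hBE
    set t : ↥I → Finset (Fin r) :=
      fun x => Finset.univ.filter (fun j => (x : α) ∈ D (ι j)) with ht
    have hall : ∀ s : Finset ↥I, s.card ≤ (s.biUnion t).card := by
      intro s
      by_contra hlt
      push_neg at hlt
      set J := s.biUnion t with hJ
      set S : Set α := Subtype.val '' (↑s : Set ↥I) with hSdef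
      set B' : Set α := Subtype.val '' (h ⁻¹' (↑(Jᶜ) : Set (Fin r))) with hB'def
      have hSsub : S ⊆ I := by rintro _ ⟨x, _, rfl⟩; exact x.2
      have hB'sub : B' ⊆ B := by rintro _ ⟨b, _, rfl⟩; exact b.2
      -- key: an element of S in D (ι j) forces j ∈ J
      have hmemJ : ∀ x : α, x ∈ S → ∀ j : Fin r, x ∈ D (ι j) → j ∈ J := by
        rintro _ ⟨x, hxs, rfl⟩ j hxj
        exact Finset.mem_biUnion.mpr ⟨x, hxs, Finset.mem_filter.mpr ⟨Finset.mem_univ _, hxj⟩⟩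
      -- an element of B' is not in S
      have hB'S : ∀ x : α, x ∈ B' → x ∉ S := by
        rintro _ ⟨b, hb, rfl⟩ hbS
        exact (Finset.mem_compl.mp hb) (hmemJ _ hbS _ (hhmem b))
      -- the combined injection on S ∪ B'
      set U : Set α := S ∪ B' with hU
      have hF : IsPT D U := by
        refine ⟨fun x => if hx : (x : α) ∈ S then f ⟨x, hSsub hx⟩
          else ι (h ⟨x, hB'sub (x.2.resolve_left hx)⟩), ?_, ?_⟩
        · intro x y hxy
          by_cases hx : (x : α) ∈ S <;> by_cases hy : (y : α) ∈ S <;>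
            simp only [hx, hy, dif_pos, dif_neg, not_false_iff] at hxy
          · have h1 := hfinj hxy
            exact Subtype.ext (congrArg (Subtype.val : ↥I → α) h1)
          · exfalso
            have hxD : (x : α) ∈ D (f ⟨x, hSsub hx⟩) := hfmem _
            rw [hxy] at hxD
            have hyB' : (y : α) ∈ B' := y.2.resolve_left hy
            obtain ⟨b, hb, hbeq⟩ := hyB'
            have : (⟨(y : α), hB'sub (y.2.resolve_left hy)⟩ : ↥B) = b := Subtype.ext hbeq.symm
            rw [this] at hxD
            exact (Finset.mem_compl.mp hb) (hmemJ _ hx _ hxD)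
          · exfalso
            have hyD : (y : α) ∈ D (f ⟨y, hSsub hy⟩) := hfmem _
            rw [← hxy] at hyD
            have hxB' : (x : α) ∈ B' := x.2.resolve_left hx
            obtain ⟨b, hb, hbeq⟩ := hxB'
            have : (⟨(x : α), hB'sub (x.2.resolve_left hx)⟩ : ↥B) = b := Subtype.ext hbeq.symm
            rw [this] at hyD
            exact (Finset.mem_compl.mp hb) (hmemJ _ hy _ hyD)
          · have h1 := hhbij.injective (hι.injective hxy)
            exact Subtype.ext (congrArg (Subtype.val : ↥B → α) h1)
        · intro x
          by_cases hx : (x : α) ∈ S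
          · simp only [hx, dif_pos]; exact hfmem _
          · simp only [hx, dif_neg, not_false_iff]; exact hhmem _
      have hUE : U ⊆ E := Set.union_subset (fun x hx => hIE (hSsub hx))
        (fun x hx => hBE (hB'sub hx))
      have hUindep : M.Indep U := (hMI U).mpr ⟨hUE, hF⟩
      have hUle : U.ncard ≤ r := hindep_le U hUindep
      -- cardinalities
      have hSfin : S.Finite := hIfin.subset hSsub
      have hB'fin : B'.Finite := hBfin.subset hB'sub
      have hScard : S.ncard = s.card := by
        rw [hSdef, Set.ncard_image_of_injective _ Subtype.val_injective,
          Set.ncard_coe_finset]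
      have hpre : (h ⁻¹' (↑(Jᶜ) : Set (Fin r))).ncard = (↑(Jᶜ) : Set (Fin r)).ncard := by
        conv_rhs => rw [← Set.image_preimage_eq (↑(Jᶜ) : Set (Fin r)) hhbij.surjective]
        rw [Set.ncard_image_of_injective _ hhbij.injective]
      have hB'card : B'.ncard = r - J.card := by
        rw [hB'def, Set.ncard_image_of_injective _ Subtype.val_injective, hpre,
          Set.ncard_coe_finset, Finset.card_compl, Fintype.card_fin]
      have hdisj : Disjoint S B' := Set.disjoint_left.mpr (fun x hxS hxB' => hB'S x hxB' hxS)
      have hUcard : U.ncard = s.card + (r - J.card) := by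
        rw [hU, Set.ncard_union_eq hdisj hSfin hB'fin, hScard, hB'card]
      have hJle : J.card ≤ r := by
        simpa using (Finset.card_le_univ J)
      omega
    obtain ⟨g, hginj, hgmem⟩ := (Finset.all_card_le_biUnion_card_iff_exists_injective t).mp hall
    exact ⟨g, hginj, fun x => (Finset.mem_filter.mp (hgmem x)).2⟩
  · rintro ⟨g, hginj, hgmem⟩
    exact ⟨fun x => ι (g x), hι.injective.comp hginj, hgmem⟩
end

section
/- Let M be a connected finite matroid with at least two elements and let x be an element of M that is not parallel to any other element (no 2-element circuit of M contains x). If the contraction M/x is disconnected, then there exist nontrivial connected flats A and B of M that are incomparable (neither contains the other) such that r(A) + r(B) = r(M) + 1 and A ∩ B = {x}. -/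
open Set
open scoped Matroid

namespace LPMAux
open LPM


variable {α : Type*} {M : Matroid α} {I J X Y C : Set α}

lemma flat_closure (M : Matroid α) (X : Set α) : M.IsFlat (M.closure X) := by
  rw [Matroid.closure_def, sInter_eq_iInter]
  have hne : Nonempty {F | M.IsFlat F ∧ X ∩ M.E ⊆ F} :=
    ⟨⟨M.E, M.ground_isFlat, inter_subset_right⟩⟩
  exact Matroid.IsFlat.iInter (fun F => F.2.1)

lemma card_le_of_indep (hE : M.E.Finite) (hJ : M.IsBasis J X) (hI : M.Indep I)
    (hIX : I ⊆ X) : I.ncard ≤ J.ncard := by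
  by_contra hlt
  push_neg at hlt
  have hIfin : I.Finite := hE.subset hI.subset_ground
  have hJfin : J.Finite := hE.subset hJ.indep.subset_ground
  have henc : J.encard < I.encard := by
    rw [← hIfin.cast_ncard_eq, ← hJfin.cast_ncard_eq]
    exact_mod_cast hlt
  obtain ⟨e, he, hins⟩ := hJ.indep.augment hI henc
  have : J = insert e J :=
    hJ.eq_of_subset_indep hins (subset_insert _ _)
      (insert_subset (hIX he.1) hJ.subset)
  exact he.2 (by rw [this]; exact mem_insert _ _)

lemma rk_basis (hE : M.E.Finite) (hJ : M.IsBasis J X) : rk M X = J.ncard := by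
  refine IsGreatest.csSup_eq ⟨⟨J, hJ.subset, hJ.indep, rfl⟩, ?_⟩
  rintro n ⟨I, hIX, hIi, rfl⟩
  exact card_le_of_indep hE hJ hIi hIX

lemma le_rk (hE : M.E.Finite) (hI : M.Indep I) (hIX : I ⊆ X) (hX : X ⊆ M.E) :
    I.ncard ≤ rk M X := by
  obtain ⟨J, hJ⟩ := M.exists_isBasis X hX
  rw [rk_basis hE hJ]
  exact card_le_of_indep hE hJ hI hIX

lemma rk_indep (hE : M.E.Finite) (hI : M.Indep I) : rk M I = I.ncard :=
  rk_basis hE hI.isBasis_self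

lemma rk_le_ncard (hE : M.E.Finite) (hX : X ⊆ M.E) : rk M X ≤ X.ncard := by
  obtain ⟨J, hJ⟩ := M.exists_isBasis X hX
  rw [rk_basis hE hJ]
  exact ncard_le_ncard hJ.subset (hE.subset hX)

lemma rk_lt_ncard_of_dep (hE : M.E.Finite) (hX : X ⊆ M.E) (hdep : ¬ M.Indep X) :
    rk M X < X.ncard := by
  obtain ⟨J, hJ⟩ := M.exists_isBasis X hX
  rw [rk_basis hE hJ]
  refine lt_of_le_of_ne (ncard_le_ncard hJ.subset (hE.subset hX)) (fun hcard => ?_)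
  have : J = X := eq_of_subset_of_ncard_le hJ.subset hcard.ge (hE.subset hX)
  exact hdep (this ▸ hJ.indep)

lemma dep_of_rk_lt (hE : M.E.Finite) (hX : X ⊆ M.E) (h : rk M X < X.ncard) :
    ¬ M.Indep X := fun hI => by
  rw [rk_indep hE hI] at h; exact lt_irrefl _ h

lemma rk_mono (hE : M.E.Finite) (hXY : X ⊆ Y) (hY : Y ⊆ M.E) : rk M X ≤ rk M Y := by
  obtain ⟨I, hI⟩ := M.exists_isBasis X (hXY.trans hY)
  rw [rk_basis hE hI]
  exact le_rk hE hI.indep (hI.subset.trans hXY) hY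

lemma rk_submod (hE : M.E.Finite) (hX : X ⊆ M.E) (hY : Y ⊆ M.E) :
    rk M (X ∪ Y) + rk M (X ∩ Y) ≤ rk M X + rk M Y := by
  obtain ⟨I, hI⟩ := M.exists_isBasis (X ∩ Y) ((inter_subset_left).trans hX)
  obtain ⟨J, hJ, hIJ⟩ := hI.indep.subset_isBasis_of_subset
    (hI.subset.trans ((inter_subset_left).trans subset_union_left))
    (union_subset hX hY)
  have hJfin : J.Finite := hE.subset hJ.indep.subset_ground
  have hJXY : J ∩ (X ∩ Y) = I := by
    refine (hI.eq_of_subset_indep (hJ.indep.subset inter_subset_left)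
      (subset_inter hIJ hI.subset) inter_subset_right).symm
  have h1 : (J ∩ X).ncard ≤ rk M X :=
    le_rk hE (hJ.indep.subset inter_subset_left) inter_subset_right hX
  have h2 : (J ∩ Y).ncard ≤ rk M Y :=
    le_rk hE (hJ.indep.subset inter_subset_left) inter_subset_right hY
  have hU : (J ∩ X) ∪ (J ∩ Y) = J := by
    rw [← inter_union_distrib_left]; exact inter_eq_self_of_subset_left hJ.subset
  have hI2 : (J ∩ X) ∩ (J ∩ Y) = I := by
    rw [← hJXY]; ext e; simp [mem_inter_iff]; tauto
  have hcard : (J ∩ X).ncard + (J ∩ Y).ncard = J.ncard + I.ncard := by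
    rw [← ncard_union_add_ncard_inter _ _ (hJfin.subset inter_subset_left)
      (hJfin.subset inter_subset_left), hU, hI2]
  rw [rk_basis hE hJ, rk_basis hE hI]
  omega

variable {e x g : α}

lemma Circuit.nonempty (hC : Circuit M C) : C.Nonempty := by
  rcases C.eq_empty_or_nonempty with h | h
  · exact absurd (h ▸ M.empty_indep) hC.2.1
  · exact h

lemma exists_circuit_of_dep (hE : M.E.Finite) (hX : X ⊆ M.E) (hdep : ¬ M.Indep X) :
    ∃ C, C ⊆ X ∧ Circuit M C := by
  have hfinpow : {D : Set α | D ⊆ X ∧ ¬ M.Indep D}.Finite := by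
    refine Set.Finite.subset (hE.subset hX).finite_subsets ?_
    intro D hD; exact hD.1
  obtain ⟨D, hD, hmin⟩ := Set.Finite.exists_minimalFor id _ hfinpow ⟨X, subset_rfl, hdep⟩
  refine ⟨D, hD.1, hD.1.trans hX, hD.2, fun D' hD' => ?_⟩
  by_contra hD'dep
  have := @hmin D' ⟨hD'.subset.trans hD.1, hD'dep⟩ hD'.subset
  exact hD'.ne (subset_antisymm this hD'.subset).symm

lemma Circuit.diff_singleton_indep (hC : Circuit M C) (he : e ∈ C) : M.Indep (C \ {e}) :=
  hC.2.2 _ (sdiff_singleton_ssubset.2 he)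

lemma circuit_rk (hE : M.E.Finite) (hC : Circuit M C) : rk M C + 1 = C.ncard := by
  obtain ⟨e, he⟩ := Circuit.nonempty hC
  have hCfin : C.Finite := hE.subset hC.1
  have h1 : (C \ {e}).ncard ≤ rk M C :=
    le_rk hE (Circuit.diff_singleton_indep hC he) diff_subset hC.1
  have h2 : rk M C < C.ncard := rk_lt_ncard_of_dep hE hC.1 hC.2.1
  have h3 : (C \ {e}).ncard = C.ncard - 1 := ncard_diff_singleton_of_mem he
  have h4 : 0 < C.ncard := (Set.ncard_pos hCfin).2 ⟨e, he⟩
  omega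

lemma circuit_eq_of_subset (hC : Circuit M C) (hD : Circuit M X) (h : X ⊆ C) : X = C := by
  by_contra hne
  exact hD.2.1 (hC.2.2 _ (ssubset_of_subset_of_ne h hne))

lemma rk_insert_le (hE : M.E.Finite) (hX : X ⊆ M.E) (hx : x ∈ M.E) :
    rk M (insert x X) ≤ rk M X + 1 := by
  obtain ⟨J, hJ⟩ := M.exists_isBasis X hX
  obtain ⟨J', hJ', hJJ'⟩ := hJ.indep.subset_isBasis_of_subset
    (hJ.subset.trans (subset_insert _ _)) (insert_subset hx hX)
  have hsub : J' ⊆ insert x J := by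
    intro y hy
    by_contra hyn
    simp only [mem_insert_iff, not_or] at hyn
    have hyX : y ∈ X := by
      rcases hJ'.subset hy with h | h
      · exact absurd h hyn.1
      · exact h
    have : insert y J ⊆ X := insert_subset hyX hJ.subset
    have := hJ.eq_of_subset_indep (hJ'.indep.subset (insert_subset hy hJJ'))
      (subset_insert _ _) this
    exact hyn.2 (by rw [this]; exact mem_insert _ _)
  rw [rk_basis hE hJ, rk_basis hE hJ']
  calc J'.ncard ≤ (insert x J).ncard :=
        ncard_le_ncard hsub (((hE.subset hJ.indep.subset_ground).insert x))
    _ ≤ J.ncard + 1 := ncard_insert_le _ _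

lemma rk_insert_of_mem_closure (hE : M.E.Finite) (hX : X ⊆ M.E)
    (hx : x ∈ M.closure X) : rk M (insert x X) = rk M X := by
  obtain ⟨J, hJ⟩ := M.exists_isBasis X hX
  have hxE : x ∈ M.E := M.closure_subset_ground X hx
  have hJ' : M.IsBasis J (insert x X) := by
    refine hJ.indep.isBasis_of_maximal_subset (hJ.subset.trans (subset_insert _ _)) ?_
      (insert_subset hxE hX)
    intro K hK hJK hKX
    by_contra hne
    obtain ⟨y, hyK, hyJ⟩ := not_subset.1 hne
    rcases hKX hyK with rfl | hyX
    · have : y ∈ M.closure J := by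
        rw [hJ.closure_eq_closure]; exact hx
      rw [(hK.subset hJK).mem_closure_iff] at this
      rcases this with hdep | hyJ'
      · exact hdep.1 (hK.subset (insert_subset hyK hJK))
      · exact hyJ hyJ'
    · have : insert y J ⊆ X := insert_subset hyX hJ.subset
      have := hJ.eq_of_subset_indep (hK.subset (insert_subset hyK hJK))
        (subset_insert _ _) this
      exact hyJ (by rw [this]; exact mem_insert _ _)
  rw [rk_basis hE hJ, rk_basis hE hJ']

lemma union_ssubset_card {A B : Set α} (hE : M.E.Finite) (hA : A ⊆ M.E) (hB : B ⊆ M.E)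
    (hsub : A ⊆ B) {y : α} (hy : y ∈ B) (hyn : y ∉ A) : A.ncard < B.ncard :=
  ncard_lt_ncard (ssubset_of_subset_of_ne hsub (fun h => hyn (h ▸ hy))) (hE.subset hB)

lemma weak_elim (hE : M.E.Finite) {C₁ C₂ : Set α} (h1 : Circuit M C₁) (h2 : Circuit M C₂)
    (hne : C₁ ≠ C₂) (hg : g ∈ C₁ ∩ C₂) :
    ∃ C, C ⊆ (C₁ ∪ C₂) \ {g} ∧ Circuit M C := by
  have hUE : C₁ ∪ C₂ ⊆ M.E := union_subset h1.1 h2.1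
  have hUfin : (C₁ ∪ C₂).Finite := hE.subset hUE
  have hint : C₁ ∩ C₂ ⊂ C₁ := by
    refine ssubset_of_subset_of_ne inter_subset_left (fun h => ?_)
    have hsub : C₁ ⊆ C₂ := by rw [← h]; exact inter_subset_right
    rcases eq_or_ssubset_of_subset hsub with h' | h'
    · exact hne h'
    · exact h1.2.1 (h2.2.2 _ h')
  have hIind := h1.2.2 _ hint
  have hsm := rk_submod hE h1.1 h2.1
  have e1 := circuit_rk hE h1
  have e2 := circuit_rk hE h2
  have e3 := rk_indep hE hIind
  have e4 := ncard_union_add_ncard_inter C₁ C₂ (hE.subset h1.1) (hE.subset h2.1)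
  have e5 : ((C₁ ∪ C₂) \ {g}).ncard = (C₁ ∪ C₂).ncard - 1 :=
    ncard_diff_singleton_of_mem (mem_union_left _ hg.1)
  have e6 : 0 < (C₁ ∪ C₂).ncard := (ncard_pos hUfin).2 ⟨g, mem_union_left _ hg.1⟩
  have e7 : rk M ((C₁ ∪ C₂) \ {g}) ≤ rk M (C₁ ∪ C₂) := rk_mono hE diff_subset hUE
  have hdep : ¬ M.Indep ((C₁ ∪ C₂) \ {g}) := by
    refine dep_of_rk_lt hE (diff_subset.trans hUE) ?_
    omega
  obtain ⟨C, hCsub, hC⟩ := exists_circuit_of_dep hE (diff_subset.trans hUE) hdep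
  exact ⟨C, hCsub, hC⟩

lemma not_subset_of_circuit {C₁ D : Set α} (h1 : Circuit M C₁) (hD : Circuit M D)
    (hg : g ∈ C₁) (hgD : g ∉ D) : ¬ D ⊆ C₁ := by
  intro hsub
  exact hD.2.1 (h1.2.2 _ (ssubset_of_subset_of_ne hsub (fun h => hgD (h ▸ hg))))

lemma strong_elim (hE : M.E.Finite) : ∀ n : ℕ, ∀ C₁ C₂ : Set α, ∀ e g : α,
    (C₁ ∪ C₂).ncard ≤ n → Circuit M C₁ → Circuit M C₂ →
    e ∈ C₁ → e ∉ C₂ → g ∈ C₁ → g ∈ C₂ →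
    ∃ C, Circuit M C ∧ e ∈ C ∧ C ⊆ (C₁ ∪ C₂) \ {g} := by
  intro n
  induction n with
  | zero =>
    intro C₁ C₂ e g hcard h1 h2 he _ _ _
    have hUfin : (C₁ ∪ C₂).Finite := hE.subset (union_subset h1.1 h2.1)
    have : 0 < (C₁ ∪ C₂).ncard := (ncard_pos hUfin).2 ⟨e, mem_union_left _ he⟩
    omega
  | succ n IH =>
    intro C₁ C₂ e g hcard h1 h2 heC₁ heC₂ hgC₁ hgC₂
    have hUE : C₁ ∪ C₂ ⊆ M.E := union_subset h1.1 h2.1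
    have hne : C₁ ≠ C₂ := fun h => heC₂ (h ▸ heC₁)
    obtain ⟨D, hDsub, hD⟩ := weak_elim hE h1 h2 hne ⟨hgC₁, hgC₂⟩
    by_cases heD : e ∈ D
    · exact ⟨D, hD, heD, hDsub⟩
    have hgD : g ∉ D := fun h => (hDsub h).2 rfl
    obtain ⟨h, hhD, hhC₁⟩ := not_subset.1 (not_subset_of_circuit h1 hD hgC₁ hgD)
    have hhC₂ : h ∈ C₂ := ((hDsub hhD).1).resolve_left hhC₁
    have hDU : D ⊆ C₁ ∪ C₂ := hDsub.trans diff_subset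
    -- first IH application
    have hm1 : (C₂ ∪ D).ncard < (C₁ ∪ C₂).ncard :=
      union_ssubset_card hE (union_subset h2.1 (hDU.trans hUE))
        hUE (union_subset subset_union_right hDU) (mem_union_left _ heC₁)
        (fun hc => hc.elim heC₂ heD)
    obtain ⟨C', hC', hgC', hC'sub⟩ := IH C₂ D g h (by omega) h2 hD hgC₂ hgD hhC₂ hhD
    have hC'U : C' ⊆ C₁ ∪ C₂ :=
      hC'sub.trans (diff_subset.trans (union_subset subset_union_right hDU))
    have heC' : e ∉ C' := fun hc => (fun hc2 => hc2.elim heC₂ heD) (hC'sub hc).1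
    have hhC' : h ∉ C' := fun hc => (hC'sub hc).2 rfl
    -- second IH application
    have hm2 : (C₁ ∪ C').ncard < (C₁ ∪ C₂).ncard :=
      union_ssubset_card hE (union_subset h1.1 (hC'U.trans hUE)) hUE
        (union_subset subset_union_left hC'U) (mem_union_right _ hhC₂)
        (fun hc => hc.elim hhC₁ hhC')
    obtain ⟨C, hC, heC, hCsub⟩ := IH C₁ C' e g (by omega) h1 hC' heC₁ heC' hgC₁ hgC'
    exact ⟨C, hC, heC, hCsub.trans (diff_subset_diff_left
      (union_subset subset_union_left hC'U))⟩

lemma circuit_trans (hE : M.E.Finite) : ∀ n : ℕ, ∀ C₁ C₂ : Set α, ∀ e f : α,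
    (C₁ ∪ C₂).ncard ≤ n → Circuit M C₁ → Circuit M C₂ →
    e ∈ C₁ → f ∈ C₂ → (C₁ ∩ C₂).Nonempty →
    ∃ C, Circuit M C ∧ e ∈ C ∧ f ∈ C := by
  intro n
  induction n with
  | zero =>
    intro C₁ C₂ e f hcard h1 h2 he _ _
    have hUfin : (C₁ ∪ C₂).Finite := hE.subset (union_subset h1.1 h2.1)
    have : 0 < (C₁ ∪ C₂).ncard := (ncard_pos hUfin).2 ⟨e, mem_union_left _ he⟩
    omega
  | succ n IH =>
    intro C₁ C₂ e f hcard h1 h2 heC₁ hfC₂ hint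
    have hUE : C₁ ∪ C₂ ⊆ M.E := union_subset h1.1 h2.1
    have hUfin : (C₁ ∪ C₂).Finite := hE.subset hUE
    by_cases hfC₁ : f ∈ C₁
    · exact ⟨C₁, h1, heC₁, hfC₁⟩
    by_cases heC₂ : e ∈ C₂
    · exact ⟨C₂, h2, heC₂, hfC₂⟩
    obtain ⟨g, hgC₁, hgC₂⟩ := hint
    obtain ⟨C₃, hC₃, heC₃, hC₃sub⟩ :=
      strong_elim hE (n+1) C₁ C₂ e g hcard h1 h2 heC₁ heC₂ hgC₁ hgC₂
    by_cases hfC₃ : f ∈ C₃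
    · exact ⟨C₃, hC₃, heC₃, hfC₃⟩
    have hgC₃ : g ∉ C₃ := fun h => (hC₃sub h).2 rfl
    have hC₃U : C₃ ⊆ C₁ ∪ C₂ := hC₃sub.trans diff_subset
    obtain ⟨h, hhC₃, hhC₁⟩ := not_subset.1 (not_subset_of_circuit h1 hC₃ hgC₁ hgC₃)
    have hhC₂ : h ∈ C₂ := (hC₃U hhC₃).resolve_left hhC₁
    by_cases hm1 : (C₃ ∪ C₂).ncard ≤ n
    · exact IH C₃ C₂ e f hm1 hC₃ h2 heC₃ hfC₂ ⟨h, hhC₃, hhC₂⟩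
    have heq1 : C₃ ∪ C₂ = C₁ ∪ C₂ := by
      refine eq_of_subset_of_ncard_le (union_subset hC₃U subset_union_right) ?_ hUfin
      omega
    have hC₁sub : C₁ \ C₂ ⊆ C₃ := by
      intro y hy
      have : y ∈ C₃ ∪ C₂ := heq1 ▸ (mem_union_left _ hy.1)
      exact this.resolve_right hy.2
    obtain ⟨C₄, hC₄, hfC₄, hC₄sub⟩ :=
      strong_elim hE (n+1) C₂ C₁ f g (by rw [union_comm]; exact hcard) h2 h1 hfC₂ hfC₁ hgC₂ hgC₁
    by_cases heC₄ : e ∈ C₄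
    · exact ⟨C₄, hC₄, heC₄, hfC₄⟩
    have hgC₄ : g ∉ C₄ := fun h => (hC₄sub h).2 rfl
    have hC₄U : C₄ ⊆ C₁ ∪ C₂ := by
      refine hC₄sub.trans (diff_subset.trans ?_); rw [union_comm]
    obtain ⟨h', hh'C₄, hh'C₂⟩ := not_subset.1 (not_subset_of_circuit h2 hC₄ hgC₂ hgC₄)
    have hh'C₁ : h' ∈ C₁ := (hC₄U hh'C₄).resolve_right hh'C₂
    by_cases hm2 : (C₁ ∪ C₄).ncard ≤ n
    · exact IH C₁ C₄ e f hm2 h1 hC₄ heC₁ hfC₄ ⟨h', hh'C₁, hh'C₄⟩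
    have heq2 : C₁ ∪ C₄ = C₁ ∪ C₂ := by
      refine eq_of_subset_of_ncard_le (union_subset subset_union_left hC₄U) ?_ hUfin
      omega
    have hC₂sub : C₂ \ C₁ ⊆ C₄ := by
      intro y hy
      have : y ∈ C₁ ∪ C₄ := heq2 ▸ (mem_union_right _ hy.1)
      exact this.resolve_left hy.2
    have hhC₄ : h ∈ C₄ := hC₂sub ⟨hhC₂, hhC₁⟩
    have hm3 : (C₃ ∪ C₄).ncard ≤ n := by
      have hsub : C₃ ∪ C₄ ⊆ (C₁ ∪ C₂) \ {g} := by
        refine union_subset hC₃sub ?_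
        refine hC₄sub.trans (diff_subset_diff_left ?_); rw [union_comm]
      have : (C₃ ∪ C₄).ncard ≤ ((C₁ ∪ C₂) \ {g}).ncard :=
        ncard_le_ncard hsub (hUfin.subset diff_subset)
      have hdg : ((C₁ ∪ C₂) \ {g}).ncard = (C₁ ∪ C₂).ncard - 1 :=
        ncard_diff_singleton_of_mem (mem_union_left _ hgC₁)
      have : 0 < (C₁ ∪ C₂).ncard := (ncard_pos hUfin).2 ⟨g, mem_union_left _ hgC₁⟩
      omega
    exact IH C₃ C₄ e f hm3 hC₃ hC₄ heC₃ hfC₄ ⟨h, hhC₃, hhC₄⟩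



lemma contract_ground : (contract M {x}).E = M.E \ {x} := by
  simp [contract, delete]

lemma delete_base_iff (hxE : x ∈ M.E) (hxi : M.Indep {x}) {B : Set α} :
    (delete M✶ {x}).IsBase B ↔ M✶.IsBase B ∧ x ∉ B := by
  obtain ⟨B₁, hB₁, hxB₁⟩ := hxi.exists_isBase_superset
  have hxB₁' : x ∈ B₁ := hxB₁ rfl
  have hB₀ : M✶.IsBase (M.E \ B₁) := hB₁.compl_isBase_dual
  have hEE : M✶.E = M.E := M.dual_ground
  have hgr : M.E \ {x} ⊆ M✶.E := by rw [hEE]; exact diff_subset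
  have hshow : (delete M✶ {x}).IsBase B ↔ M✶.IsBasis B (M.E \ {x}) := by
    have : delete M✶ {x} = M✶ ↾ (M.E \ {x}) := by
      unfold delete; rw [hEE]
    rw [this, Matroid.isBase_restrict_iff hgr]
  rw [hshow]
  constructor
  · intro hBb
    obtain ⟨B₂, hB₂, hBB₂⟩ := hBb.indep.exists_isBase_superset
    have hB₂sub : B₂ ⊆ insert x B := by
      intro y hy
      by_contra hyn
      simp only [mem_insert_iff, not_or] at hyn
      have hyE : y ∈ M✶.E := hB₂.subset_ground hy
      have : insert y B ⊆ M.E \ {x} :=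
        insert_subset ⟨hEE ▸ hyE, hyn.1⟩ hBb.subset
      have := hBb.eq_of_subset_indep (hB₂.indep.subset (insert_subset hy hBB₂))
        (subset_insert _ _) this
      exact hyn.2 (by rw [this]; exact mem_insert _ _)
    by_cases hxB₂ : x ∈ B₂
    · obtain ⟨y, hy, hB₃⟩ := hB₂.exchange hB₀ ⟨hxB₂, fun h => h.2 hxB₁'⟩
      have hyx : y ≠ x := fun h => hy.1.2 (h ▸ hxB₁')
      have hBsub : B ⊆ insert y (B₂ \ {x}) := by
        intro z hz
        exact mem_insert_of_mem _ ⟨hBB₂ hz, fun h => (h ▸ hz : x ∈ B) |>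
          (fun hc => ((hBb.subset hz).2 (h : z = x)))⟩
      have hins : insert y (B₂ \ {x}) ⊆ M.E \ {x} := by
        refine insert_subset ⟨hEE ▸ hy.1.1, hyx⟩ ?_
        intro z hz
        rcases hB₂sub hz.1 with h | h
        · exact absurd h hz.2
        · exact hBb.subset h
      have hBeq := hBb.eq_of_subset_indep hB₃.indep hBsub hins
      rw [hBeq]
      exact ⟨hB₃, fun h => by
        rcases h with h | h
        · exact hyx h.symm
        · exact h.2 rfl⟩
    · have : B₂ ⊆ B := fun y hy => (hB₂sub hy).resolve_left (fun h => hxB₂ (h ▸ hy))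
      have hBeq : B = B₂ := subset_antisymm hBB₂ this
      exact ⟨hBeq ▸ hB₂, fun h => (hBb.subset h).2 rfl⟩
  · rintro ⟨hB, hxB⟩
    refine hB.indep.isBasis_of_maximal_subset
      (subset_diff_singleton (hEE ▸ hB.subset_ground) hxB) ?_ hgr
    intro K hK hBK _
    exact (hB.eq_of_subset_indep hK hBK).symm.subset

lemma contract_indep_iff (hxE : x ∈ M.E) (hxi : M.Indep {x}) {I : Set α} :
    (contract M {x}).Indep I ↔ x ∉ I ∧ M.Indep (insert x I) := by
  have hiff : (contract M {x}).Indep I ↔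
      I ⊆ (delete M✶ {x}).E ∧ ∃ B, (delete M✶ {x}).IsBase B ∧ Disjoint I B :=
    Matroid.dual_indep_iff_exists'
  have hgrd : (delete M✶ {x}).E = M.E \ {x} := by simp [delete]
  rw [hiff, hgrd]
  constructor
  · rintro ⟨hIsub, B, hB, hdisj⟩
    rw [delete_base_iff hxE hxi] at hB
    have hB' : M.IsBase (M.E \ B) := hB.1.compl_isBase_of_dual
    have hxB' : x ∈ M.E \ B := ⟨hxE, hB.2⟩
    have hIB' : I ⊆ M.E \ B := fun y hy =>
      ⟨(hIsub hy).1, fun hc => (disjoint_left.1 hdisj) hy hc⟩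
    exact ⟨fun h => (hIsub h).2 rfl,
      hB'.indep.subset (insert_subset hxB' hIB')⟩
  · rintro ⟨hxI, hins⟩
    obtain ⟨B', hB', hsub⟩ := hins.exists_isBase_superset
    have hIB' : I ⊆ B' := (subset_insert _ _).trans hsub
    have hxB' : x ∈ B' := hsub (mem_insert _ _)
    have hIE : I ⊆ M.E \ {x} :=
      subset_diff_singleton ((subset_insert x I).trans hins.subset_ground) hxI
    refine ⟨hIE, M.E \ B', ?_, ?_⟩
    · rw [delete_base_iff hxE hxi]
      exact ⟨hB'.compl_isBase_dual, fun h => h.2 hxB'⟩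
    · exact Set.disjoint_sdiff_right.mono_left hIB'


section Transfer
variable {α : Type*} {M N : Matroid α} {x : α} {C D S T X : Set α}

/-- An `M`-circuit through `x` gives an `N = M/x` circuit. -/
lemma circuit_contract_of_circuit (hNE : N.E = M.E \ {x})
    (hNind : ∀ I : Set α, N.Indep I ↔ x ∉ I ∧ M.Indep (insert x I))
    (hC : Circuit M C) (hxC : x ∈ C) : Circuit N (C \ {x}) := by
  refine ⟨by rw [hNE]; exact diff_subset_diff_left hC.1, ?_, ?_⟩
  · rw [hNind]
    rintro ⟨-, hind⟩
    rw [insert_diff_singleton, insert_eq_of_mem hxC] at hind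
    exact hC.2.1 hind
  · intro D' hD'
    rw [hNind]
    refine ⟨fun h => (hD'.subset h).2 rfl, ?_⟩
    refine hC.2.2 _ ?_
    obtain ⟨w, hwD, hwD'⟩ := exists_of_ssubset hD'
    refine ssubset_of_subset_of_ne
      (insert_subset hxC (hD'.subset.trans diff_subset)) (fun heq => ?_)
    have : w ∈ insert x D' := heq ▸ hwD.1
    rcases this with h | h
    · exact hwD.2 h
    · exact hwD' h

lemma not_indep_insert_of_contract_circuit (hNE : N.E = M.E \ {x})
    (hNind : ∀ I : Set α, N.Indep I ↔ x ∉ I ∧ M.Indep (insert x I))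
    (hD : Circuit N D) : ¬ M.Indep (insert x D) := fun h =>
  hD.2.1 ((hNind D).2 ⟨fun hxD => ((hNE ▸ hD.1) hxD).2 rfl, h⟩)

lemma contract_circuit_of_dep (hNfin : N.E.Finite) (hNE : N.E = M.E \ {x})
    (hNind : ∀ I : Set α, N.Indep I ↔ x ∉ I ∧ M.Indep (insert x I))
    (hCE : C ⊆ M.E \ {x}) (hdep : ¬ M.Indep C) :
    ∃ D, D ⊆ C ∧ Circuit N D := by
  refine exists_circuit_of_dep hNfin (hNE ▸ hCE) ?_
  rw [hNind]
  rintro ⟨-, hind⟩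
  exact hdep (hind.subset (subset_insert _ _))

end Transfer

section Main
variable {α : Type*} {M N : Matroid α} {x : α} {C S T X : Set α}

lemma key_add (hfin : M.E.Finite) (hx : x ∈ M.E) (hxi : M.Indep {x})
    (hNfin : N.E.Finite) (hNE : N.E = M.E \ {x})
    (hNind : ∀ I : Set α, N.Indep I ↔ x ∉ I ∧ M.Indep (insert x I))
    (hST : S ∪ T = M.E \ {x}) (hdisj : ∀ e ∈ S, e ∉ T)
    (hcr : ∀ D, Circuit N D → D ⊆ S ∨ D ⊆ T)
    (hX : X ⊆ M.E \ {x}) :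
    rk M (insert x (X ∩ S)) + rk M (insert x (X ∩ T)) = rk M (insert x X) + 1 := by
  have hE' : M.E \ {x} ⊆ M.E := diff_subset
  have hSE : S ⊆ M.E \ {x} := subset_union_left.trans hST.subset
  have hTE : T ⊆ M.E \ {x} := subset_union_right.trans hST.subset
  have hXE : insert x X ⊆ M.E := insert_subset hx (hX.trans hE')
  have hXS : insert x (X ∩ S) ⊆ M.E :=
    insert_subset hx ((inter_subset_left).trans (hX.trans hE'))
  have hXT : insert x (X ∩ T) ⊆ M.E :=
    insert_subset hx ((inter_subset_left).trans (hX.trans hE'))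
  obtain ⟨JS, hJS, hxJS⟩ := hxi.subset_isBasis_of_subset
    (singleton_subset_iff.2 (mem_insert _ _)) hXS
  obtain ⟨JT, hJT, hxJT⟩ := hxi.subset_isBasis_of_subset
    (singleton_subset_iff.2 (mem_insert _ _)) hXT
  have hxJS' : x ∈ JS := hxJS rfl
  have hxJT' : x ∈ JT := hxJT rfl
  have hMS : ∀ y, y ∈ JS ∪ JT → y ∈ S → y ∈ JS := by
    intro y hy hyS
    rcases hy with h | h
    · exact h
    · rcases mem_insert_iff.1 (hJT.subset h) with rfl | h2
      · exact absurd rfl (hSE hyS).2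
      · exact absurd h2.2 (hdisj y hyS)
  have hMT : ∀ y, y ∈ JS ∪ JT → y ∈ T → y ∈ JT := by
    intro y hy hyT
    rcases hy with h | h
    · rcases mem_insert_iff.1 (hJS.subset h) with rfl | h2
      · exact absurd rfl (hTE hyT).2
      · exact absurd hyT (hdisj y h2.2)
    · exact h
  have hJind : M.Indep (JS ∪ JT) := by
    by_contra hdep
    obtain ⟨C', hCsub, hC⟩ := exists_circuit_of_dep hfin
      (union_subset hJS.indep.subset_ground hJT.indep.subset_ground) hdep
    by_cases hxC : x ∈ C'
    · have hD := circuit_contract_of_circuit hNE hNind hC hxC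
      rcases hcr _ hD with h | h
      · refine hC.2.1 (hJS.indep.subset (fun y hy => ?_))
        by_cases hyx : y = x
        · exact hyx ▸ hxJS'
        · exact hMS y (hCsub hy) (h ⟨hy, hyx⟩)
      · refine hC.2.1 (hJT.indep.subset (fun y hy => ?_))
        by_cases hyx : y = x
        · exact hyx ▸ hxJT'
        · exact hMT y (hCsub hy) (h ⟨hy, hyx⟩)
    · have hCE' : C' ⊆ M.E \ {x} := subset_diff_singleton hC.1 hxC
      obtain ⟨D, hDsub, hD⟩ := contract_circuit_of_dep hNfin hNE hNind hCE' hC.2.1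
      rcases hcr _ hD with h | h
      · exact not_indep_insert_of_contract_circuit hNE hNind hD
          (hJS.indep.subset (insert_subset hxJS'
            (fun y hy => hMS y (hCsub (hDsub hy)) (h hy))))
      · exact not_indep_insert_of_contract_circuit hNE hNind hD
          (hJT.indep.subset (insert_subset hxJT'
            (fun y hy => hMT y (hCsub (hDsub hy)) (h hy))))
  have hJSfin : JS.Finite := hfin.subset hJS.indep.subset_ground
  have hJTfin : JT.Finite := hfin.subset hJT.indep.subset_ground
  have hJink : JS ∩ JT = {x} := by
    apply subset_antisymm
    · rintro y ⟨h1, h2⟩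
      rcases mem_insert_iff.1 (hJS.subset h1) with rfl | hy1
      · rfl
      rcases mem_insert_iff.1 (hJT.subset h2) with rfl | hy2
      · rfl
      · exact absurd hy2.2 (hdisj y hy1.2)
    · exact singleton_subset_iff.2 ⟨hxJS', hxJT'⟩
  have hcard := ncard_union_add_ncard_inter JS JT hJSfin hJTfin
  rw [hJink, ncard_singleton] at hcard
  have hle : (JS ∪ JT).ncard ≤ rk M (insert x X) := by
    refine le_rk hfin hJind (union_subset ?_ ?_) hXE
    · exact hJS.subset.trans (insert_subset_insert inter_subset_left)
    · exact hJT.subset.trans (insert_subset_insert inter_subset_left)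
  have hsm := rk_submod hfin hXS hXT
  have hU : insert x (X ∩ S) ∪ insert x (X ∩ T) = insert x X := by
    rw [← insert_union_distrib, ← inter_union_distrib_left, hST,
      inter_eq_self_of_subset_left hX]
  have hI : insert x (X ∩ S) ∩ insert x (X ∩ T) = {x} := by
    apply subset_antisymm
    · rintro y ⟨h1, h2⟩
      rcases mem_insert_iff.1 h1 with rfl | hy1
      · rfl
      rcases mem_insert_iff.1 h2 with rfl | hy2
      · rfl
      · exact absurd hy2.2 (hdisj y hy1.2)
    · exact singleton_subset_iff.2 ⟨mem_insert _ _, mem_insert _ _⟩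
  rw [hU, hI, rk_indep hfin hxi, ncard_singleton] at hsm
  have h1 : rk M (insert x (X ∩ S)) = JS.ncard := rk_basis hfin hJS
  have h2 : rk M (insert x (X ∩ T)) = JT.ncard := rk_basis hfin hJT
  omega

lemma key_closure (hfin : M.E.Finite) (hx : x ∈ M.E) (hxi : M.Indep {x})
    (hNfin : N.E.Finite) (hNE : N.E = M.E \ {x})
    (hNind : ∀ I : Set α, N.Indep I ↔ x ∉ I ∧ M.Indep (insert x I))
    (hST : S ∪ T = M.E \ {x}) (hdisj : ∀ e ∈ S, e ∉ T)
    (hcr : ∀ D, Circuit N D → D ⊆ S ∨ D ⊆ T)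
    (hC : Circuit M C) (hxC : x ∉ C)
    (hCS : (C ∩ S).Nonempty) (hCT : (C ∩ T).Nonempty) :
    x ∈ M.closure (C ∩ S) := by
  have hCE' : C ⊆ M.E \ {x} := subset_diff_singleton hC.1 hxC
  have hCfin : C.Finite := hfin.subset hC.1
  have hUC : C ∩ S ⊂ C := by
    obtain ⟨t, htC, htT⟩ := hCT
    refine ssubset_of_subset_of_ne inter_subset_left (fun h => ?_)
    have : t ∈ C ∩ S := h.symm ▸ htC
    exact hdisj t this.2 htT
  have hVC : C ∩ T ⊂ C := by
    obtain ⟨s, hsC, hsS⟩ := hCS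
    refine ssubset_of_subset_of_ne inter_subset_left (fun h => ?_)
    have : s ∈ C ∩ T := h.symm ▸ hsC
    exact hdisj s hsS this.2
  have hUind := hC.2.2 _ hUC
  have hVind := hC.2.2 _ hVC
  have hxU : x ∉ C ∩ S := fun h => hxC h.1
  have hxV : x ∉ C ∩ T := fun h => hxC h.1
  have hUV : (C ∩ S) ∪ (C ∩ T) = C := by
    rw [← inter_union_distrib_left, hST, inter_eq_self_of_subset_left hCE']
  have hUVd : (C ∩ S) ∩ (C ∩ T) = ∅ := by
    rw [eq_empty_iff_forall_notMem]
    rintro y ⟨⟨-, h1⟩, ⟨-, h2⟩⟩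
    exact hdisj y h1 h2
  have hadd := key_add hfin hx hxi hNfin hNE hNind hST hdisj hcr hCE'
  by_contra hclU
  have hiU : M.Indep (insert x (C ∩ S)) := by
    rw [hUind.insert_indep_iff_of_notMem hxU]
    exact ⟨hx, hclU⟩
  have e1 : rk M (insert x (C ∩ S)) = (C ∩ S).ncard + 1 := by
    rw [rk_indep hfin hiU, ncard_insert_of_notMem hxU (hCfin.subset inter_subset_left)]
  have e2 : (C ∩ T).ncard ≤ rk M (insert x (C ∩ T)) :=
    le_rk hfin hVind (subset_insert _ _)
      (insert_subset hx ((inter_subset_left).trans hC.1))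
  have e3 : rk M (insert x C) ≤ rk M C + 1 := rk_insert_le hfin hC.1 hx
  have e4 := circuit_rk hfin hC
  have e5 : (C ∩ S).ncard + (C ∩ T).ncard = C.ncard := by
    have h := ncard_union_add_ncard_inter (C ∩ S) (C ∩ T)
      (hCfin.subset inter_subset_left) (hCfin.subset inter_subset_left)
    rw [hUV, hUVd, ncard_empty] at h
    omega
  have e6 : ¬ M.Indep (insert x (C ∩ T)) := by
    intro hind
    have h := rk_indep hfin hind
    rw [ncard_insert_of_notMem hxV (hCfin.subset inter_subset_left)] at h
    omega
  have hxclV : x ∈ M.closure (C ∩ T) := by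
    have hdep : M.Dep (insert x (C ∩ T)) :=
      ⟨e6, insert_subset hx ((inter_subset_left).trans hC.1)⟩
    exact (hVind.insert_dep_iff.1 hdep).1
  have hxclC : x ∈ M.closure C := M.closure_subset_closure inter_subset_left hxclV
  have e7 : rk M (insert x C) = rk M C := rk_insert_of_mem_closure hfin hC.1 hxclC
  omega

lemma key_circuit (hfin : M.E.Finite) (hx : x ∈ M.E) (hxi : M.Indep {x})
    (hNfin : N.E.Finite) (hNE : N.E = M.E \ {x})
    (hNind : ∀ I : Set α, N.Indep I ↔ x ∉ I ∧ M.Indep (insert x I))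
    (hST : S ∪ T = M.E \ {x}) (hdisj : ∀ e ∈ S, e ∉ T)
    (hcr : ∀ D, Circuit N D → D ⊆ S ∨ D ⊆ T)
    (hC : Circuit M C) (hxC : x ∉ C)
    (hCS : (C ∩ S).Nonempty) (hCT : (C ∩ T).Nonempty) :
    ∃ C₁, Circuit M C₁ ∧ x ∈ C₁ ∧ C ∩ S ⊆ C₁ ∧ C₁ ⊆ insert x (C ∩ S) := by
  have hST' : T ∪ S = M.E \ {x} := by rw [union_comm]; exact hST
  have hdisj' : ∀ e ∈ T, e ∉ S := fun e heT heS => hdisj e heS heT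
  have hcr' : ∀ D, Circuit N D → D ⊆ T ∨ D ⊆ S := fun D hD => (hcr D hD).symm
  have hxclU := key_closure hfin hx hxi hNfin hNE hNind hST hdisj hcr hC hxC hCS hCT
  have hxclV := key_closure hfin hx hxi hNfin hNE hNind hST' hdisj' hcr' hC hxC hCT hCS
  have hCfin : C.Finite := hfin.subset hC.1
  have hUC : C ∩ S ⊂ C := by
    obtain ⟨t, htC, htT⟩ := hCT
    refine ssubset_of_subset_of_ne inter_subset_left (fun h => ?_)
    have : t ∈ C ∩ S := h.symm ▸ htC
    exact hdisj t this.2 htT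
  have hVC : C ∩ T ⊂ C := by
    obtain ⟨s, hsC, hsS⟩ := hCS
    refine ssubset_of_subset_of_ne inter_subset_left (fun h => ?_)
    have : s ∈ C ∩ T := h.symm ▸ hsC
    exact hdisj s hsS this.2
  have hUind := hC.2.2 _ hUC
  have hVind := hC.2.2 _ hVC
  have hxU : x ∉ C ∩ S := fun h => hxC h.1
  have hxV : x ∉ C ∩ T := fun h => hxC h.1
  have hdepU : M.Dep (insert x (C ∩ S)) := hUind.insert_dep_iff.2 ⟨hxclU, hxU⟩
  have hdepV : M.Dep (insert x (C ∩ T)) := hVind.insert_dep_iff.2 ⟨hxclV, hxV⟩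
  obtain ⟨C₁, hC₁sub, hC₁⟩ := exists_circuit_of_dep hfin hdepU.2 hdepU.1
  obtain ⟨C₂, hC₂sub, hC₂⟩ := exists_circuit_of_dep hfin hdepV.2 hdepV.1
  have hxC₁ : x ∈ C₁ := by
    by_contra h
    exact hC₁.2.1 (hUind.subset (fun y hy =>
      (mem_insert_iff.1 (hC₁sub hy)).resolve_left (fun hh => h (hh ▸ hy))))
  have hxC₂ : x ∈ C₂ := by
    by_contra h
    exact hC₂.2.1 (hVind.subset (fun y hy =>
      (mem_insert_iff.1 (hC₂sub hy)).resolve_left (fun hh => h (hh ▸ hy))))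
  have hne : C₁ ≠ C₂ := by
    intro heq
    refine hC₁.2.1 (hxi.subset (fun y hy => ?_))
    rcases mem_insert_iff.1 (hC₁sub hy) with rfl | h1
    · exact rfl
    rcases mem_insert_iff.1 (hC₂sub (heq ▸ hy)) with rfl | h2
    · exact rfl
    · exact absurd h2.2 (hdisj y h1.2)
  obtain ⟨C₃, hC₃sub, hC₃⟩ := weak_elim hfin hC₁ hC₂ hne ⟨hxC₁, hxC₂⟩
  have hC₃C : C₃ ⊆ C := by
    intro y hy
    have h := hC₃sub hy
    rcases h.1 with h1 | h1
    · exact ((mem_insert_iff.1 (hC₁sub h1)).resolve_left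
        (fun hh => h.2 (mem_singleton_iff.2 hh))).1
    · exact ((mem_insert_iff.1 (hC₂sub h1)).resolve_left
        (fun hh => h.2 (mem_singleton_iff.2 hh))).1
  have hC₃eq : C₃ = C := circuit_eq_of_subset hC hC₃ hC₃C
  refine ⟨C₁, hC₁, hxC₁, ?_, hC₁sub⟩
  intro y hy
  have hyC₃ : y ∈ C₃ := hC₃eq ▸ hy.1
  rcases (hC₃sub hyC₃).1 with h1 | h1
  · exact h1
  · rcases mem_insert_iff.1 (hC₂sub h1) with rfl | h2
    · exact absurd hy.1 hxC
    · exact absurd h2.2 (hdisj y hy.2)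

lemma key_flat (hfin : M.E.Finite) (hx : x ∈ M.E) (hxi : M.Indep {x})
    (hpar : ¬ ∃ y : α, y ≠ x ∧ Circuit M {x, y})
    (hpair : ∀ e ∈ M.E, e ≠ x → M.Indep {x, e})
    (hNfin : N.E.Finite) (hNE : N.E = M.E \ {x})
    (hNind : ∀ I : Set α, N.Indep I ↔ x ∉ I ∧ M.Indep (insert x I))
    (hST : S ∪ T = M.E \ {x}) (hdisj : ∀ e ∈ S, e ∉ T)
    (hcr : ∀ D, Circuit N D → D ⊆ S ∨ D ⊆ T) :
    ∀ e ∈ S, e ∉ M.closure (insert x T) := by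
  intro e heS hecl
  have hE' : M.E \ {x} ⊆ M.E := diff_subset
  have hSE : S ⊆ M.E \ {x} := subset_union_left.trans hST.subset
  have hTE : T ⊆ M.E \ {x} := subset_union_right.trans hST.subset
  have hex : e ≠ x := by simpa using (hSE heS).2
  have heE : e ∈ M.E := hE' (hSE heS)
  have hxT : insert x T ⊆ M.E := insert_subset hx (hTE.trans hE')
  obtain ⟨J, hJ, hxJ⟩ := hxi.subset_isBasis_of_subset
    (singleton_subset_iff.2 (mem_insert _ _)) hxT
  have hxJ' : x ∈ J := hxJ rfl
  have hJT : ∀ y ∈ J, y ≠ x → y ∈ T := fun y hy hyx =>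
    (mem_insert_iff.1 (hJ.subset hy)).resolve_left hyx
  have hecl' : e ∈ M.closure J := by rw [hJ.closure_eq_closure]; exact hecl
  have heJ : e ∉ J := fun h => hdisj e heS (hJT e h hex)
  have hdep : M.Dep (insert e J) := hJ.indep.insert_dep_iff.2 ⟨hecl', heJ⟩
  obtain ⟨C, hCsub, hC⟩ := exists_circuit_of_dep hfin hdep.2 hdep.1
  have heC : e ∈ C := by
    by_contra h
    exact hC.2.1 (hJ.indep.subset (fun y hy =>
      (mem_insert_iff.1 (hCsub hy)).resolve_left (fun hh => h (hh ▸ hy))))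
  have hCT : ∀ y ∈ C, y ≠ x → y ≠ e → y ∈ T := fun y hy hyx hye =>
    hJT y ((mem_insert_iff.1 (hCsub hy)).resolve_left hye) hyx
  by_cases hxC : x ∈ C
  · have hD := circuit_contract_of_circuit hNE hNind hC hxC
    rcases hcr _ hD with h | h
    · have hsub : C ⊆ insert x {e} := by
        intro y hy
        by_cases hyx : y = x
        · exact hyx ▸ mem_insert _ _
        by_cases hye : y = e
        · exact hye ▸ mem_insert_of_mem _ rfl
        · exact absurd (hCT y hy hyx hye) (hdisj y (h ⟨hy, hyx⟩))
      have hCeq : C = {x, e} := subset_antisymm hsub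
        (insert_subset hxC (singleton_subset_iff.2 heC))
      exact hpar ⟨e, hex, hCeq ▸ hC⟩
    · exact hdisj e heS (h ⟨heC, hex⟩)
  · have hCE' : C ⊆ M.E \ {x} := subset_diff_singleton hC.1 hxC
    obtain ⟨D, hDsub, hD⟩ := contract_circuit_of_dep hNfin hNE hNind hCE' hC.2.1
    rcases hcr _ hD with h | h
    · have hDsube : D ⊆ {e} := by
        intro y hy
        by_contra hye
        have hyx : y ≠ x := fun hc => hxC (hc ▸ hDsub hy)
        exact hdisj y (h hy) (hCT y (hDsub hy) hyx
          (fun hc => hye (mem_singleton_iff.2 hc)))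
      have heD : e ∈ D := by
        obtain ⟨d, hd⟩ := Circuit.nonempty hD
        have hde : d = e := hDsube hd
        exact hde ▸ hd
      have hDe : D = {e} := subset_antisymm hDsube (singleton_subset_iff.2 heD)
      refine not_indep_insert_of_contract_circuit hNE hNind hD ?_
      rw [hDe]
      exact hpair e heE hex
    · refine not_indep_insert_of_contract_circuit hNE hNind hD
        (hJ.indep.subset (insert_subset hxJ' (fun y hy => ?_)))
      have hye : y ≠ e := fun hc => hdisj e heS (hc ▸ (h hy))
      exact (mem_insert_iff.1 (hCsub (hDsub hy))).resolve_left hye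

lemma key_main (hfin : M.E.Finite) (hconn : Connected M)
    (hx : x ∈ M.E) (hxi : M.Indep {x})
    (hpar : ¬ ∃ y : α, y ≠ x ∧ Circuit M {x, y})
    (hpair : ∀ e ∈ M.E, e ≠ x → M.Indep {x, e})
    (hNfin : N.E.Finite) (hNE : N.E = M.E \ {x})
    (hNind : ∀ I : Set α, N.Indep I ↔ x ∉ I ∧ M.Indep (insert x I))
    (hST : S ∪ T = M.E \ {x}) (hdisj : ∀ e ∈ S, e ∉ T)
    (hcr : ∀ D, Circuit N D → D ⊆ S ∨ D ⊆ T) (hSne : S.Nonempty) :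
    NTConnFlat M (insert x S) := by
  have hE' : M.E \ {x} ⊆ M.E := diff_subset
  have hSE : S ⊆ M.E \ {x} := subset_union_left.trans hST.subset
  have hA : insert x S ⊆ M.E := insert_subset hx (hSE.trans hE')
  have hPcirc : ∀ w ∈ S, ∃ C, Circuit M C ∧ C ⊆ insert x S ∧ x ∈ C ∧ w ∈ C := by
    intro w hw
    have hwx : w ∉ ({x} : Set α) := (hSE hw).2
    have hwx' : w ≠ x := by simpa using hwx
    obtain ⟨C, hC, hxC, hwC⟩ := hconn x hx w (hE' (hSE hw)) (Ne.symm hwx')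
    refine ⟨C, hC, ?_, hxC, hwC⟩
    have hD := circuit_contract_of_circuit hNE hNind hC hxC
    rcases hcr _ hD with h | h
    · intro y hy
      by_cases hyx : y = x
      · exact hyx ▸ mem_insert _ _
      · exact mem_insert_of_mem _ (h ⟨hy, hyx⟩)
    · exact absurd (h ⟨hwC, hwx⟩) (hdisj w hw)
  have hcircA : ∀ u v, u ∈ insert x S → v ∈ insert x S → u ≠ v →
      ∃ C, Circuit M C ∧ C ⊆ insert x S ∧ u ∈ C ∧ v ∈ C := by
    intro u v hu hv huv
    rcases mem_insert_iff.1 hu with rfl | huS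
    · rcases mem_insert_iff.1 hv with rfl | hvS
      · exact absurd rfl huv
      · obtain ⟨C, hC, hsub, hxC, hvC⟩ := hPcirc v hvS
        exact ⟨C, hC, hsub, hxC, hvC⟩
    · rcases mem_insert_iff.1 hv with rfl | hvS
      · obtain ⟨C, hC, hsub, hxC, huC⟩ := hPcirc u huS
        exact ⟨C, hC, hsub, huC, hxC⟩
      · obtain ⟨C, hC, huC, hvC⟩ := hconn u (hE' (hSE huS)) v (hE' (hSE hvS)) huv
        by_cases hxC : x ∈ C
        · have hD := circuit_contract_of_circuit hNE hNind hC hxC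
          rcases hcr _ hD with h | h
          · refine ⟨C, hC, fun y hy => ?_, huC, hvC⟩
            by_cases hyx : y = x
            · exact hyx ▸ mem_insert _ _
            · exact mem_insert_of_mem _ (h ⟨hy, hyx⟩)
          · exact absurd (h ⟨huC, (hSE huS).2⟩) (hdisj u huS)
        · by_cases hCT : (C ∩ T).Nonempty
          · obtain ⟨C₁, hC₁, hxC₁, hsub1, hsub2⟩ := key_circuit hfin hx hxi hNfin hNE
              hNind hST hdisj hcr hC hxC ⟨u, huC, huS⟩ hCT
            exact ⟨C₁, hC₁, hsub2.trans (insert_subset_insert inter_subset_right),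
              hsub1 ⟨huC, huS⟩, hsub1 ⟨hvC, hvS⟩⟩
          · refine ⟨C, hC, fun y hy => ?_, huC, hvC⟩
            have hyx : y ∉ ({x} : Set α) := fun hc => hxC (mem_singleton_iff.1 hc ▸ hy)
            have hyE : y ∈ S ∪ T := by rw [hST]; exact ⟨hC.1 hy, hyx⟩
            rcases hyE with h | h
            · exact mem_insert_of_mem _ h
            · exact absurd (⟨y, hy, h⟩ : (C ∩ T).Nonempty) hCT
  obtain ⟨w, hw⟩ := hSne
  obtain ⟨C₀, hC₀, hsub₀, hxC₀, hwC₀⟩ := hPcirc w hw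
  have hdepA : ¬ M.Indep (insert x S) := fun h => hC₀.2.1 (h.subset hsub₀)
  have hclosA : M.closure (insert x S) = insert x S := by
    apply subset_antisymm
    · intro e he
      have heE : e ∈ M.E := M.closure_subset_ground _ he
      by_cases hex : e = x
      · exact hex ▸ mem_insert _ _
      · have heE' : e ∈ S ∪ T := by
          rw [hST]
          exact ⟨heE, by simpa using hex⟩
        rcases heE' with h | h
        · exact mem_insert_of_mem _ h
        · exact absurd he (key_flat hfin hx hxi hpar hpair hNfin hNE hNind
            (by rw [union_comm]; exact hST) (fun p hpT hpS => hdisj p hpS hpT)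
            (fun D hD => (hcr D hD).symm) e h)
    · exact M.subset_closure _ hA
  refine ⟨?_, hdepA, ?_⟩
  · rw [← hclosA]; exact flat_closure M _
  · intro u hu v hv huv
    rw [Matroid.restrict_ground_eq] at hu hv
    obtain ⟨C, hC, hsub, huC, hvC⟩ := hcircA u v hu hv huv
    refine ⟨C, ⟨?_, ?_, ?_⟩, huC, hvC⟩
    · rw [Matroid.restrict_ground_eq]; exact hsub
    · rw [Matroid.restrict_indep_iff]; rintro ⟨h, -⟩; exact hC.2.1 h
    · intro D hD
      rw [Matroid.restrict_indep_iff]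
      exact ⟨hC.2.2 D hD, hD.subset.trans hsub⟩

end Main

end LPMAux

open LPMAux


open LPM in
/-- If `M` is a connected finite matroid with at least two
elements, `x` is not parallel to any element, and `M/x` is disconnected, then
there are nontrivial incomparable connected flats `A`, `B` of `M` with
`r(A) + r(B) = r(M) + 1` and `A ∩ B = {x}`. -/
theorem stmt2 {α : Type*} (M : Matroid α) (hfin : M.E.Finite)
    (hconn : Connected M) (h2 : 2 ≤ M.E.ncard)
    (x : α) (hx : x ∈ M.E)
    (hpar : ¬ ∃ y : α, y ≠ x ∧ Circuit M {x, y})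
    (hdis : ¬ Connected (contract M {x})) :
    ∃ A B : Set α, NTConnFlat M A ∧ NTConnFlat M B ∧
      ¬ A ⊆ B ∧ ¬ B ⊆ A ∧
      rk M A + rk M B = rk M M.E + 1 ∧ A ∩ B = {x} := by
  classical
  -- no loops
  have hsing : ∀ e ∈ M.E, M.Indep {e} := by
    intro e he
    by_contra hdep
    have h1 : 1 < M.E.ncard := by omega
    obtain ⟨f, hf, hfe⟩ := Set.exists_ne_of_one_lt_ncard h1 e
    obtain ⟨C, hC, heC, hfC⟩ := hconn e he f hf (Ne.symm hfe)
    refine hdep (hC.2.2 _ (ssubset_of_subset_of_ne (singleton_subset_iff.2 heC)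
      (fun h => hfe ?_)))
    have : f ∈ ({e} : Set α) := h ▸ hfC
    simpa using this
  have hxi : M.Indep {x} := hsing x hx
  -- no parallel pairs through x
  have hpair : ∀ e ∈ M.E, e ≠ x → M.Indep {x, e} := by
    intro e he hne
    by_contra hdep
    refine hpar ⟨e, hne, insert_subset hx (singleton_subset_iff.2 he), hdep, ?_⟩
    intro D hD
    by_cases hxD : x ∈ D
    · by_cases heD : e ∈ D
      · exact absurd (subset_antisymm hD.subset
          (insert_subset hxD (singleton_subset_iff.2 heD))) hD.ne
      · refine hxi.subset (fun y hy => ?_)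
        rcases hD.subset hy with h | h
        · exact h
        · exact absurd (mem_singleton_iff.1 h ▸ hy) heD
    · refine (hsing e he).subset (fun y hy => ?_)
      rcases hD.subset hy with h | h
      · exact absurd (mem_singleton_iff.1 h ▸ hy) hxD
      · exact h
  -- the contraction
  have hNE : (contract M {x}).E = M.E \ {x} := contract_ground
  have hNfin : (contract M {x}).E.Finite := by
    rw [hNE]; exact hfin.subset diff_subset
  have hNind : ∀ I : Set α, (contract M {x}).Indep I ↔ x ∉ I ∧ M.Indep (insert x I) :=
    fun I => contract_indep_iff hx hxi
  unfold Connected at hdis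
  push_neg at hdis
  obtain ⟨a, ha, b, hb, hab, hnc⟩ := hdis
  -- the two sides of the separation of M/x
  set P := {e ∈ M.E \ {x} | e = a ∨ ∃ D, Circuit (contract M {x}) D ∧ a ∈ D ∧ e ∈ D}
    with hPdef
  set Q := (M.E \ {x}) \ P with hQdef
  have haE : a ∈ M.E \ {x} := hNE ▸ ha
  have hbE : b ∈ M.E \ {x} := hNE ▸ hb
  have haP : a ∈ P := ⟨haE, Or.inl rfl⟩
  have hbQ : b ∈ Q := by
    refine ⟨hbE, fun hbP => ?_⟩
    rcases hbP.2 with h | ⟨D, hD, haD, hbD⟩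
    · exact hab h.symm
    · exact hnc D hD haD hbD
  have hPsub : P ⊆ M.E \ {x} := sep_subset _ _
  have hQsub : Q ⊆ M.E \ {x} := diff_subset
  have hPQ : P ∪ Q = M.E \ {x} := union_diff_cancel hPsub
  have hdisjPQ : ∀ e ∈ P, e ∉ Q := fun e he hq => hq.2 he
  have hdisjQP : ∀ e ∈ Q, e ∉ P := fun e he => he.2
  -- circuits of M/x do not cross the separation
  have hcross : ∀ D, Circuit (contract M {x}) D → D ⊆ P ∨ D ⊆ Q := by
    intro D hD
    by_cases hDP : (D ∩ P).Nonempty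
    · left
      obtain ⟨p, hpD, hpP⟩ := hDP
      intro e heD
      refine ⟨hNE ▸ hD.1 heD, ?_⟩
      by_cases hea : e = a
      · exact Or.inl hea
      rcases hpP.2 with rfl | ⟨Da, hDa, haDa, hpDa⟩
      · exact Or.inr ⟨D, hD, hpD, heD⟩
      · right
        obtain ⟨C, hC, haC, heC⟩ := circuit_trans hNfin ((Da ∪ D).ncard) Da D a e
          le_rfl hDa hD haDa heD ⟨p, hpDa, hpD⟩
        exact ⟨C, hC, haC, heC⟩
    · right
      intro e he
      exact ⟨hNE ▸ hD.1 he, fun heP => hDP ⟨e, he, heP⟩⟩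
  -- rank identity
  have hranks := key_add hfin hx hxi hNfin hNE hNind hPQ hdisjPQ hcross
    (X := M.E \ {x}) subset_rfl
  rw [inter_eq_self_of_subset_right hPsub, inter_eq_self_of_subset_right hQsub,
    insert_diff_singleton, insert_eq_of_mem hx] at hranks
  -- the two flats
  have hQPun : Q ∪ P = M.E \ {x} := by rw [union_comm]; exact hPQ
  have hcross' : ∀ D, Circuit (contract M {x}) D → D ⊆ Q ∨ D ⊆ P :=
    fun D hD => (hcross D hD).symm
  have hA := key_main hfin hconn hx hxi hpar hpair hNfin hNE hNind hPQ hdisjPQ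
    hcross ⟨a, haP⟩
  have hB := key_main hfin hconn hx hxi hpar hpair hNfin hNE hNind hQPun hdisjQP
    hcross' ⟨b, hbQ⟩
  refine ⟨insert x P, insert x Q, hA, hB, ?_, ?_, hranks, ?_⟩
  · intro hsub
    rcases mem_insert_iff.1 (hsub (mem_insert_of_mem _ haP)) with h | h
    · exact (haE.2) (mem_singleton_iff.2 h)
    · exact h.2 haP
  · intro hsub
    rcases mem_insert_iff.1 (hsub (mem_insert_of_mem _ hbQ)) with h | h
    · exact (hbE.2) (mem_singleton_iff.2 h)
    · exact hbQ.2 h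
  · apply subset_antisymm
    · rintro y ⟨h1, h2⟩
      rcases mem_insert_iff.1 h1 with rfl | hyP
      · rfl
      rcases mem_insert_iff.1 h2 with rfl | hyQ
      · rfl
      · exact absurd hyP hyQ.2
    · exact singleton_subset_iff.2 ⟨mem_insert _ _, mem_insert _ _⟩
end

section
/- Let M be a connected finite matroid with at least two elements, let X be a nontrivial connected flat of M, and let x ∈ X be such that the restriction M|(X − x) is connected. Then the deletion M∖x is connected. -/
open Set
open scoped Matroid

namespace LPM

variable {α β : Type*}

section Aux

variable {M : Matroid α}

lemma exists_circuit_subset (hfin : M.E.Finite) (C : Set α) (hCE : C ⊆ M.E)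
    (hdep : ¬ M.Indep C) : ∃ C', C' ⊆ C ∧ Circuit M C' := by
  have key : ∀ n (C : Set α), C.ncard = n → C ⊆ M.E → ¬ M.Indep C →
      ∃ C', C' ⊆ C ∧ Circuit M C' := by
    intro n
    induction n using Nat.strong_induction_on with
    | _ n ih =>
      rintro C rfl hCE hdep
      by_cases h : ∀ D : Set α, D ⊂ C → M.Indep D
      · exact ⟨C, Subset.rfl, hCE, hdep, h⟩
      push_neg at h
      obtain ⟨D, hDC, hDdep⟩ := h
      obtain ⟨C', hC'D, hC'⟩ := ih D.ncard (ncard_lt_ncard hDC (hfin.subset hCE)) D rfl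
        (hDC.subset.trans hCE) hDdep
      exact ⟨C', hC'D.trans hDC.subset, hC'⟩
  exact key C.ncard C rfl hCE hdep

lemma exists_circuit_elim (hfin : M.E.Finite) {C₁ C₂ : Set α} (h₁ : Circuit M C₁)
    (h₂ : Circuit M C₂) (hne : C₁ ≠ C₂) {e : α} (he₁ : e ∈ C₁) (he₂ : e ∈ C₂) :
    ∃ C₃, Circuit M C₃ ∧ C₃ ⊆ (C₁ ∪ C₂) \ {e} := by
  have hUE : C₁ ∪ C₂ ⊆ M.E := union_subset h₁.1 h₂.1
  have hUfin : (C₁ ∪ C₂).Finite := hfin.subset hUE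
  have hf : ∃ f, f ∈ C₂ ∧ f ∉ C₁ := by
    by_contra h; push_neg at h
    have hsub : C₂ ⊆ C₁ := h
    rcases hsub.ssubset_or_eq with hss | rfl
    · exact h₂.2.1 (h₁.2.2 _ hss)
    · exact hne rfl
  obtain ⟨f, hf₂, hf₁⟩ := hf
  have hI₂ : M.Indep (C₂ \ {f}) := h₂.2.2 _ (sdiff_singleton_ssubset.mpr hf₂)
  obtain ⟨J, hJ, hJsub⟩ := hI₂.subset_isBasis_of_subset
    (diff_subset.trans subset_union_right) hUE
  have hfJ : f ∉ J := by
    intro hfJ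
    refine h₂.2.1 (hJ.indep.subset fun a ha => ?_)
    by_cases h : a = f
    · exact h ▸ hfJ
    · exact hJsub ⟨ha, h⟩
  have hg : ∃ g, g ∈ C₁ ∧ g ∉ J := by
    by_contra h; push_neg at h
    exact h₁.2.1 (hJ.indep.subset h)
  obtain ⟨g, hgC, hgJ⟩ := hg
  have hdep : ¬ M.Indep ((C₁ ∪ C₂) \ {e}) := by
    intro hI
    obtain ⟨J', hJ', hJ'sub⟩ := hI.subset_isBasis_of_subset diff_subset hUE
    have hcard : J'.ncard = J.ncard := by
      have := hJ'.encard_eq_encard hJ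
      simp only [Set.ncard, this]
    have hJfin : J.Finite := hfin.subset hJ.indep.subset_ground
    have hJ'fin : J'.Finite := hfin.subset hJ'.indep.subset_ground
    have hJsub2 : J ⊆ (C₁ ∪ C₂) \ {f, g} := by
      intro a ha
      refine ⟨hJ.subset ha, ?_⟩
      rintro (rfl | rfl)
      · exact hfJ ha
      · exact hgJ ha
    have h1 : ((C₁ ∪ C₂) \ {e}).ncard ≤ J'.ncard := ncard_le_ncard hJ'sub hJ'fin
    have h2 : J.ncard ≤ ((C₁ ∪ C₂) \ {f, g}).ncard :=
      ncard_le_ncard hJsub2 hUfin.diff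
    have hfg : f ≠ g := fun h => hf₁ (h ▸ hgC)
    have hfgsub : ({f, g} : Set α) ⊆ C₁ ∪ C₂ := by
      rintro a (rfl | rfl)
      · exact Or.inr hf₂
      · exact Or.inl hgC
    have he1 : ((C₁ ∪ C₂) \ {e}).ncard = (C₁ ∪ C₂).ncard - 1 :=
      ncard_diff_singleton_of_mem (Or.inl he₁)
    have he2 : ((C₁ ∪ C₂) \ {f, g}).ncard = (C₁ ∪ C₂).ncard - 2 := by
      rw [ncard_diff hfgsub (hUfin.subset hfgsub), ncard_pair hfg]
    have h3 : 2 ≤ (C₁ ∪ C₂).ncard := by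
      have := ncard_le_ncard hfgsub hUfin
      rwa [ncard_pair hfg] at this
    omega
  obtain ⟨C₃, hsub, hC₃⟩ := exists_circuit_subset hfin _ (diff_subset.trans hUE) hdep
  exact ⟨C₃, hC₃, hsub⟩

lemma strong_elim (hfin : M.E.Finite) :
    ∀ (n : ℕ) (C₁ C₂ : Set α), (C₁ ∪ C₂).ncard ≤ n → Circuit M C₁ → Circuit M C₂ →
      ∀ e, e ∈ C₁ → e ∈ C₂ → ∀ f, f ∈ C₁ → f ∉ C₂ →
        ∃ D, Circuit M D ∧ f ∈ D ∧ D ⊆ (C₁ ∪ C₂) \ {e} := by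
  intro n
  induction n using Nat.strong_induction_on with
  | _ n ih =>
    intro C₁ C₂ hn h₁ h₂ e he₁ he₂ f hf₁ hf₂
    have hUE : C₁ ∪ C₂ ⊆ M.E := union_subset h₁.1 h₂.1
    have hUfin : (C₁ ∪ C₂).Finite := hfin.subset hUE
    have hne : C₁ ≠ C₂ := fun h => hf₂ (h ▸ hf₁)
    obtain ⟨C₃, hC₃, hC₃sub⟩ := exists_circuit_elim hfin h₁ h₂ hne he₁ he₂
    by_cases hfC₃ : f ∈ C₃
    · exact ⟨C₃, hC₃, hfC₃, hC₃sub⟩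
    have hg : ∃ g, g ∈ C₃ ∧ g ∈ C₂ ∧ g ∉ C₁ := by
      by_contra h; push_neg at h
      have hsub : C₃ ⊆ C₁ := by
        intro a ha
        rcases (hC₃sub ha).1 with h' | h'
        · exact h'
        · exact h a ha h'
      have hss : C₃ ⊂ C₁ := hsub.ssubset_of_ne (by
        rintro rfl; exact (hC₃sub he₁).2 rfl)
      exact hC₃.2.1 (h₁.2.2 _ hss)
    obtain ⟨g, hgC₃, hgC₂, hgC₁⟩ := hg
    -- first recursive call on (C₂, C₃), common g, keep e ∈ C₂ \ C₃
    have heC₃ : e ∉ C₃ := fun h => (hC₃sub h).2 rfl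
    have hm₁ : (C₂ ∪ C₃).ncard < n := by
      have hss : C₂ ∪ C₃ ⊂ C₁ ∪ C₂ := by
        constructor
        · apply union_subset subset_union_right
          exact hC₃sub.trans (diff_subset.trans Subset.rfl)
        · intro hsup
          rcases hsup (Or.inl hf₁) with h' | h'
          · exact hf₂ h'
          · exact hfC₃ h'
      exact lt_of_lt_of_le (ncard_lt_ncard hss hUfin) hn
    obtain ⟨C₄, hC₄, heC₄, hC₄sub⟩ := ih _ hm₁ C₂ C₃ le_rfl h₂ hC₃ g hgC₂ hgC₃ e he₂ heC₃
    have hC₄sub' : C₄ ⊆ C₁ ∪ C₂ := by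
      refine hC₄sub.trans (diff_subset.trans ?_)
      apply union_subset subset_union_right
      exact hC₃sub.trans diff_subset
    -- second recursive call on (C₁, C₄), common e, keep f
    have hfC₄ : f ∉ C₄ := by
      intro h
      rcases hC₄sub' h with h' | h'
      · exact hfC₃ (by
          rcases (hC₄sub h).1 with h'' | h''
          · exact absurd h'' hf₂
          · exact h'')
      · exact hf₂ h'
    have hm₂ : (C₁ ∪ C₄).ncard < n := by
      have hss : C₁ ∪ C₄ ⊂ C₁ ∪ C₂ := by
        constructor
        · exact union_subset subset_union_left hC₄sub'
        · intro hsup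
          rcases hsup (Or.inr hgC₂) with h' | h'
          · exact hgC₁ h'
          · exact (hC₄sub h').2 rfl
      exact lt_of_lt_of_le (ncard_lt_ncard hss hUfin) hn
    obtain ⟨D, hD, hfD, hDsub⟩ := ih _ hm₂ C₁ C₄ le_rfl h₁ hC₄ e he₁ heC₄ f hf₁ hfC₄
    refine ⟨D, hD, hfD, hDsub.trans ?_⟩
    intro a ⟨ha, hae⟩
    refine ⟨?_, hae⟩
    rcases ha with h' | h'
    · exact Or.inl h'
    · exact hC₄sub' h'

lemma circuit_trans (hfin : M.E.Finite) :
    ∀ (n : ℕ) (C₁ C₂ : Set α), (C₁ ∪ C₂).ncard ≤ n → Circuit M C₁ → Circuit M C₂ →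
      (C₁ ∩ C₂).Nonempty → ∀ e, e ∈ C₁ → ∀ g, g ∈ C₂ →
        ∃ D, Circuit M D ∧ D ⊆ C₁ ∪ C₂ ∧ e ∈ D ∧ g ∈ D := by
  intro n
  induction n using Nat.strong_induction_on with
  | _ n ih =>
    intro C₁ C₂ hn h₁ h₂ hmeet e he₁ g hg₂
    have hUE : C₁ ∪ C₂ ⊆ M.E := union_subset h₁.1 h₂.1
    have hUfin : (C₁ ∪ C₂).Finite := hfin.subset hUE
    by_cases heC₂ : e ∈ C₂
    · exact ⟨C₂, h₂, subset_union_right, heC₂, hg₂⟩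
    by_cases hgC₁ : g ∈ C₁
    · exact ⟨C₁, h₁, subset_union_left, he₁, hgC₁⟩
    obtain ⟨f, hf₁, hf₂⟩ := hmeet
    -- C₃ : circuit with e ∈ C₃ ⊆ (C₁ ∪ C₂) \ {f}
    obtain ⟨C₃, hC₃, heC₃, hC₃sub⟩ := strong_elim hfin (C₁ ∪ C₂).ncard C₁ C₂ le_rfl
      h₁ h₂ f hf₁ hf₂ e he₁ heC₂
    by_cases hgC₃ : g ∈ C₃
    · exact ⟨C₃, hC₃, hC₃sub.trans diff_subset, heC₃, hgC₃⟩
    have hC₃U : C₃ ⊆ C₁ ∪ C₂ := hC₃sub.trans diff_subset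
    have hfC₃ : f ∉ C₃ := fun h => (hC₃sub h).2 rfl
    have hh : ∃ h, h ∈ C₃ ∧ h ∈ C₂ ∧ h ∉ C₁ := by
      by_contra hcon; push_neg at hcon
      have hsub : C₃ ⊆ C₁ := by
        intro a ha
        rcases hC₃U ha with h' | h'
        · exact h'
        · exact hcon a ha h'
      exact hC₃.2.1 (h₁.2.2 _ (hsub.ssubset_of_ne (by rintro rfl; exact hfC₃ hf₁)))
    obtain ⟨h, hhC₃, hhC₂, hhC₁⟩ := hh
    -- C₄ : circuit with g ∈ C₄ ⊆ (C₁ ∪ C₂) \ {f}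
    obtain ⟨C₄, hC₄, hgC₄, hC₄sub⟩ := strong_elim hfin (C₂ ∪ C₁).ncard C₂ C₁ le_rfl
      h₂ h₁ f hf₂ hf₁ g hg₂ hgC₁
    rw [union_comm C₂ C₁] at hC₄sub
    by_cases heC₄ : e ∈ C₄
    · exact ⟨C₄, hC₄, hC₄sub.trans diff_subset, heC₄, hgC₄⟩
    have hC₄U : C₄ ⊆ C₁ ∪ C₂ := hC₄sub.trans diff_subset
    have hfC₄ : f ∉ C₄ := fun hm => (hC₄sub hm).2 rfl
    have hl : ∃ l, l ∈ C₄ ∧ l ∈ C₁ ∧ l ∉ C₂ := by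
      by_contra hcon; push_neg at hcon
      have hsub : C₄ ⊆ C₂ := by
        intro a ha
        rcases hC₄U ha with h' | h'
        · exact hcon a ha h'
        · exact h'
      exact hC₄.2.1 (h₂.2.2 _ (hsub.ssubset_of_ne (by rintro rfl; exact hfC₄ hf₂)))
    obtain ⟨l, hlC₄, hlC₁, hlC₂⟩ := hl
    -- case 1 : C₃ ∪ C₂ proper
    by_cases hcase₁ : C₃ ∪ C₂ = C₁ ∪ C₂
    · by_cases hcase₂ : C₁ ∪ C₄ = C₁ ∪ C₂
      · -- both equal : use (C₃, C₄), union avoids f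
        have hC₁sub : C₁ \ C₂ ⊆ C₃ := by
          intro a ⟨ha₁, ha₂⟩
          have hm' : a ∈ C₃ ∪ C₂ := by rw [hcase₁]; exact Or.inl ha₁
          rcases hm' with h' | h'
          · exact h'
          · exact absurd h' ha₂
        have hC₂sub : C₂ \ C₁ ⊆ C₄ := by
          intro a ⟨ha₂, ha₁⟩
          have hm' : a ∈ C₁ ∪ C₄ := by rw [hcase₂]; exact Or.inr ha₂
          rcases hm' with h' | h'
          · exact absurd h' ha₁
          · exact h'
        have hhC₄ : h ∈ C₄ := hC₂sub ⟨hhC₂, hhC₁⟩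
        have hm : (C₃ ∪ C₄).ncard < n := by
          have hss : C₃ ∪ C₄ ⊂ C₁ ∪ C₂ := by
            constructor
            · exact union_subset hC₃U hC₄U
            · intro hsup
              rcases hsup (Or.inl hf₁) with h' | h'
              · exact hfC₃ h'
              · exact hfC₄ h'
          exact lt_of_lt_of_le (ncard_lt_ncard hss hUfin) hn
        obtain ⟨D, hD, hDsub, heD, hgD⟩ := ih _ hm C₃ C₄ le_rfl hC₃ hC₄
          ⟨h, hhC₃, hhC₄⟩ e heC₃ g hgC₄
        exact ⟨D, hD, hDsub.trans (union_subset hC₃U hC₄U), heD, hgD⟩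
      · -- C₁ ∪ C₄ proper : recurse on (C₁, C₄)
        have hm : (C₁ ∪ C₄).ncard < n := by
          have hss : C₁ ∪ C₄ ⊂ C₁ ∪ C₂ :=
            (union_subset subset_union_left hC₄U).ssubset_of_ne hcase₂
          exact lt_of_lt_of_le (ncard_lt_ncard hss hUfin) hn
        obtain ⟨D, hD, hDsub, heD, hgD⟩ := ih _ hm C₁ C₄ le_rfl h₁ hC₄
          ⟨l, hlC₁, hlC₄⟩ e he₁ g hgC₄
        exact ⟨D, hD, hDsub.trans (union_subset subset_union_left hC₄U), heD, hgD⟩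
    · -- C₃ ∪ C₂ proper : recurse on (C₃, C₂)
      have hm : (C₃ ∪ C₂).ncard < n := by
        have hss : C₃ ∪ C₂ ⊂ C₁ ∪ C₂ :=
          (union_subset hC₃U subset_union_right).ssubset_of_ne hcase₁
        exact lt_of_lt_of_le (ncard_lt_ncard hss hUfin) hn
      obtain ⟨D, hD, hDsub, heD, hgD⟩ := ih _ hm C₃ C₂ le_rfl hC₃ h₂
        ⟨h, hhC₃, hhC₂⟩ e heC₃ g hg₂
      exact ⟨D, hD, hDsub.trans (union_subset hC₃U subset_union_right), heD, hgD⟩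

lemma circuit_restrict_iff {R C : Set α} (hR : R ⊆ M.E) :
    Circuit (M ↾ R) C ↔ Circuit M C ∧ C ⊆ R := by
  unfold Circuit
  simp only [Matroid.restrict_ground_eq, Matroid.restrict_indep_iff]
  constructor
  · rintro ⟨hCR, hdep, hmin⟩
    exact ⟨⟨hCR.trans hR, fun hI => hdep ⟨hI, hCR⟩, fun D hD => (hmin D hD).1⟩, hCR⟩
  · rintro ⟨⟨hCE, hdep, hmin⟩, hCR⟩
    exact ⟨hCR, fun h' => hdep h'.1, fun D hD => ⟨hmin D hD, hD.subset.trans hCR⟩⟩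

lemma indep_singleton_conn (hconn : Connected M) (h2 : 2 ≤ M.E.ncard) {e : α}
    (he : e ∈ M.E) : M.Indep {e} := by
  obtain ⟨b, hbE, hbe⟩ := exists_ne_of_one_lt_ncard (s := M.E) (by omega) e
  obtain ⟨C, hC, heC, hbC⟩ := hconn e he b hbE (Ne.symm hbe)
  refine hC.2.2 {e} ((singleton_subset_iff.mpr heC).ssubset_of_ne fun h => ?_)
  rw [← h] at hbC
  exact hbe (by simpa using hbC)

end Aux

end LPM

open LPM in
/-- If `X` is a nontrivial connected flat of a connected finite
matroid `M` with at least two elements, `x ∈ X`, and `M|(X − x)` is connected,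
then `M \ x` is connected. -/
theorem stmt3 {α : Type*} (M : Matroid α) (hfin : M.E.Finite)
    (hconn : Connected M) (h2 : 2 ≤ M.E.ncard)
    (X : Set α) (hX : NTConnFlat M X)
    (x : α) (hx : x ∈ X)
    (hXx : Connected (M ↾ (X \ {x}))) :
    Connected (delete M {x}) := by
  obtain ⟨hXflat, hXdep, hXconn⟩ := hX
  have hXE : X ⊆ M.E := hXflat.subset_ground
  have hxE : x ∈ M.E := hXE hx
  -- an element of X other than x
  have hw : ∃ w ∈ X, w ≠ x := by
    by_contra hcon; push_neg at hcon
    have hsub : X ⊆ {x} := fun a ha => hcon a ha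
    rcases subset_singleton_iff_eq.mp hsub with rfl | rfl
    · exact hXdep M.empty_indep
    · exact hXdep (indep_singleton_conn hconn h2 hxE)
  obtain ⟨w, hwX, hwx⟩ := hw
  -- a circuit through x inside X
  obtain ⟨Cx, hCx', hxCx, hwCx⟩ :=
    hXconn x (by simpa using hx) w (by simpa using hwX) (Ne.symm hwx)
  rw [circuit_restrict_iff hXE] at hCx'
  obtain ⟨hCx, hCxX⟩ := hCx'
  -- linking relation avoiding x
  set L : α → α → Prop := fun a b => ∃ D, Circuit M D ∧ x ∉ D ∧ a ∈ D ∧ b ∈ D with hL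
  have Ltrans : ∀ a b c, L a b → L b c → L a c := by
    rintro a b c ⟨D₁, h₁, hx₁, ha, hb₁⟩ ⟨D₂, h₂, hx₂, hb₂, hc⟩
    obtain ⟨D, hD, hDsub, haD, hcD⟩ := circuit_trans hfin (D₁ ∪ D₂).ncard D₁ D₂ le_rfl
      h₁ h₂ ⟨b, hb₁, hb₂⟩ a ha c hc
    refine ⟨D, hD, fun hm => ?_, haD, hcD⟩
    rcases hDsub hm with h' | h'
    · exact hx₁ h'
    · exact hx₂ h'
  have Lsymm : ∀ a b, L a b → L b a := by
    rintro a b ⟨D, hD, hxD, ha, hb⟩; exact ⟨D, hD, hxD, hb, ha⟩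
  -- every element of E \ {x} is equal or linked to an element of X \ {x}
  have link : ∀ a, a ∈ M.E → a ≠ x → ∃ b, b ∈ X ∧ b ≠ x ∧ (a = b ∨ L a b) := by
    intro a haE hax
    by_cases haX : a ∈ X
    · exact ⟨a, haX, hax, Or.inl rfl⟩
    obtain ⟨C, hC, haC, hxC⟩ := hconn a haE x hxE hax
    have haCx : a ∉ Cx := fun h => haX (hCxX h)
    obtain ⟨D, hD, haD, hDsub⟩ := strong_elim hfin (C ∪ Cx).ncard C Cx le_rfl
      hC hCx x hxC hxCx a haC haCx
    have hxD : x ∉ D := fun h => (hDsub h).2 rfl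
    have hDX : (D ∩ X).Nonempty := by
      by_contra hcon
      rw [not_nonempty_iff_eq_empty] at hcon
      have hsub : D ⊆ C := by
        intro d hd
        rcases (hDsub hd).1 with h' | h'
        · exact h'
        · exact absurd (mem_inter hd (hCxX h')) (by rw [hcon]; exact notMem_empty d)
      exact hD.2.1 (hC.2.2 _ (hsub.ssubset_of_ne (by rintro rfl; exact hxD hxC)))
    obtain ⟨b, hbD, hbX⟩ := hDX
    exact ⟨b, hbX, fun h => hxD (h ▸ hbD), Or.inr ⟨D, hD, hxD, haD, hbD⟩⟩
  -- elements of X \ {x} are pairwise linked or equal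
  have linkX : ∀ a b, a ∈ X → a ≠ x → b ∈ X → b ≠ x → a = b ∨ L a b := by
    intro a b haX hax hbX hbx
    by_cases hab : a = b
    · exact Or.inl hab
    have hXxE : X \ {x} ⊆ M.E := diff_subset.trans hXE
    obtain ⟨C, hC, haC, hbC⟩ := hXx a (by simp [haX, hax]) b (by simp [hbX, hbx]) hab
    rw [circuit_restrict_iff hXxE] at hC
    exact Or.inr ⟨C, hC.1, fun h => (hC.2 h).2 rfl, haC, hbC⟩
  -- main argument
  intro y hy z hz hyz
  have hy' : y ∈ M.E ∧ y ≠ x := by simpa [delete] using hy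
  have hz' : z ∈ M.E ∧ z ≠ x := by simpa [delete] using hz
  obtain ⟨by', hbyX, hbyx, hyR⟩ := link y hy'.1 hy'.2
  obtain ⟨bz, hbzX, hbzx, hzR⟩ := link z hz'.1 hz'.2
  have hmid := linkX by' bz hbyX hbyx hbzX hbzx
  have hyR' : y = bz ∨ L y bz := by
    rcases hyR with rfl | hyR
    · exact hmid
    rcases hmid with rfl | hmid
    · exact Or.inr hyR
    · exact Or.inr (Ltrans _ _ _ hyR hmid)
  have hyz' : y = z ∨ L y z := by
    rcases hzR with rfl | hzR
    · exact hyR'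
    rcases hyR' with rfl | hyR'
    · exact Or.inr (Lsymm _ _ hzR)
    · exact Or.inr (Ltrans _ _ _ hyR' (Lsymm _ _ hzR))
  rcases hyz' with rfl | ⟨D, hD, hxD, hyD, hzD⟩
  · exact absurd rfl hyz
  refine ⟨D, ?_, hyD, hzD⟩
  rw [show delete M {x} = M ↾ (M.E \ {x}) from rfl, circuit_restrict_iff diff_subset]
  exact ⟨hD, fun d hd => ⟨hD.1 hd, fun h => hxD (by rwa [mem_singleton_iff.mp h] at hd)⟩⟩
end

section
/- Let M and M′ be loopless finite matroids on the same ground set E. Suppose that a subset F ⊆ E is a nontrivial connected flat of M if and only if it is a nontrivial connected flat of M′, and that r_M(F) = r_{M′}(F) for every such flat F. Then M and M′ have exactly the same circuits, and hence M = M′. -/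
open Set
open scoped Matroid

section Stmt4Aux
open LPM

variable {α : Type*} {M : Matroid α} {C C₁ C₂ D I X F : Set α} {e f x y : α}

lemma circ_indep_diff (hC : Circuit M C) (he : e ∈ C) : M.Indep (C \ {e}) :=
  hC.2.2 _ (sdiff_singleton_ssubset.2 he)

lemma circ_nonempty (hC : Circuit M C) : C.Nonempty := by
  rcases C.eq_empty_or_nonempty with h | h
  · exact absurd (h ▸ M.empty_indep) hC.2.1
  · exact h

lemma circ_mem_closure (hC : Circuit M C) (he : e ∈ C) : e ∈ M.closure (C \ {e}) := by
  have hI := circ_indep_diff hC he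
  rw [hI.mem_closure_iff]
  left
  rw [Set.insert_diff_singleton, Set.insert_eq_of_mem he]
  exact ⟨hC.2.1, hC.1⟩

lemma circ_subset_closure_diff (hC : Circuit M C) (he : e ∈ C) :
    C ⊆ M.closure (C \ {e}) := by
  intro f hf
  rcases eq_or_ne f e with rfl | hfe
  · exact circ_mem_closure hC hf
  · exact M.subset_closure _ ((Set.diff_subset).trans hC.1) ⟨hf, hfe⟩

lemma circ_closure_diff (hC : Circuit M C) (he : e ∈ C) :
    M.closure (C \ {e}) = M.closure C :=
  (M.closure_subset_closure Set.diff_subset).antisymm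
    (Matroid.closure_subset_closure_of_subset_closure (circ_subset_closure_diff hC he))

lemma exists_circuit_aux (hfin : M.E.Finite) :
    ∀ n (X : Set α), X.ncard ≤ n → X ⊆ M.E → ¬ M.Indep X → ∃ C ⊆ X, Circuit M C := by
  intro n
  induction n with
  | zero =>
    intro X hle hXE hX
    have hX0 : X = ∅ := (Set.ncard_eq_zero (hfin.subset hXE)).1 (Nat.le_zero.1 hle)
    exact absurd (hX0 ▸ M.empty_indep) hX
  | succ n ih =>
    intro X hle hXE hX
    by_cases h : ∀ D, D ⊂ X → M.Indep D
    · exact ⟨X, subset_rfl, hXE, hX, h⟩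
    · push_neg at h
      obtain ⟨D, hDX, hD⟩ := h
      have hlt : D.ncard < X.ncard := Set.ncard_lt_ncard hDX (hfin.subset hXE)
      obtain ⟨C, hCD, hC⟩ := ih D (by omega) (hDX.subset.trans hXE) hD
      exact ⟨C, hCD.trans hDX.subset, hC⟩

lemma exists_circuit (hfin : M.E.Finite) (hXE : X ⊆ M.E) (hX : ¬ M.Indep X) :
    ∃ C ⊆ X, Circuit M C :=
  exists_circuit_aux hfin X.ncard X le_rfl hXE hX

lemma fund_circuit (hfin : M.E.Finite) (hI : M.Indep I) (he : e ∈ M.closure I)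
    (heI : e ∉ I) : ∃ C, Circuit M C ∧ e ∈ C ∧ C ⊆ insert e I := by
  have heE : e ∈ M.E := M.closure_subset_ground I he
  have hdep : ¬ M.Indep (insert e I) := fun h => heI ((hI.mem_closure_iff'.1 he).2 h)
  obtain ⟨C, hCs, hC⟩ := exists_circuit hfin (Set.insert_subset heE hI.subset_ground) hdep
  refine ⟨C, hC, ?_, hCs⟩
  by_contra heC
  exact hC.2.1 (hI.subset fun x hx => ((hCs hx).resolve_left (fun h => heC (h ▸ hx))))

lemma strong_elim (hfin : M.E.Finite) (h₁ : Circuit M C₁) (h₂ : Circuit M C₂)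
    (he : e ∈ C₁ ∩ C₂) (hf : f ∈ C₁ \ C₂) :
    ∃ D, Circuit M D ∧ f ∈ D ∧ D ⊆ (C₁ ∪ C₂) \ {e} := by
  set Y := (C₁ ∪ C₂) \ {e, f} with hY
  have hYE : Y ⊆ M.E := Set.diff_subset.trans (Set.union_subset h₁.1 h₂.1)
  have heY : e ∈ M.closure Y := by
    refine M.closure_subset_closure (fun z hz => ?_) (circ_mem_closure h₂ he.2)
    exact ⟨Set.mem_union_right _ hz.1, by
      rintro (rfl | rfl)
      · exact hz.2 rfl
      · exact hf.2 hz.1⟩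
  have hfY : f ∈ M.closure Y := by
    refine Matroid.closure_subset_closure_of_subset_closure ?_ (circ_mem_closure h₁ hf.1)
    intro z hz
    by_cases hze : z = e
    · exact hze ▸ heY
    · exact M.subset_closure Y hYE ⟨Set.mem_union_left _ hz.1, by
        rintro (rfl | rfl)
        · exact hze rfl
        · exact hz.2 rfl⟩
  obtain ⟨I, hI⟩ := M.exists_isBasis Y hYE
  have hfI : f ∈ M.closure I := by rw [hI.closure_eq_closure]; exact hfY
  have hfnI : f ∉ I := fun h => (hI.subset h).2 (Or.inr rfl)
  obtain ⟨D, hD, hfD, hDs⟩ := fund_circuit hfin hI.indep hfI hfnI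
  refine ⟨D, hD, hfD, hDs.trans ?_⟩
  rintro z (rfl | hz)
  · exact ⟨Set.mem_union_left _ hf.1, fun h => hf.2 (Set.mem_singleton_iff.1 h ▸ he.2)⟩
  · have := hI.subset hz
    exact ⟨this.1, fun h => this.2 (Or.inl (Set.mem_singleton_iff.1 h))⟩

lemma union_circuit_aux (hfin : M.E.Finite) :
    ∀ n (C₁ C₂ : Set α), Circuit M C₁ → Circuit M C₂ → (C₁ ∩ C₂).Nonempty →
      ∀ x ∈ C₁, ∀ y ∈ C₂, (C₁ ∪ C₂).ncard ≤ n →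
      ∃ D, Circuit M D ∧ x ∈ D ∧ y ∈ D ∧ D ⊆ C₁ ∪ C₂ := by
  intro n
  induction n with
  | zero =>
    intro C₁ C₂ h₁ h₂ hne x hx y hy hle
    have hfinU : (C₁ ∪ C₂).Finite := hfin.subset (Set.union_subset h₁.1 h₂.1)
    have hpos : 0 < (C₁ ∪ C₂).ncard :=
      (Set.ncard_pos hfinU).2 ((circ_nonempty h₁).mono Set.subset_union_left)
    omega
  | succ n ih =>
    intro C₁ C₂ h₁ h₂ hne x hx y hy hle
    have hfinU : (C₁ ∪ C₂).Finite := hfin.subset (Set.union_subset h₁.1 h₂.1)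
    by_cases hyC₁ : y ∈ C₁
    · exact ⟨C₁, h₁, hx, hyC₁, Set.subset_union_left⟩
    by_cases hxC₂ : x ∈ C₂
    · exact ⟨C₂, h₂, hxC₂, hy, Set.subset_union_right⟩
    obtain ⟨e, he⟩ := hne
    obtain ⟨C₃, h₃, hxC₃, hC₃s⟩ := strong_elim hfin h₁ h₂ he ⟨hx, hxC₂⟩
    by_cases hyC₃ : y ∈ C₃
    · exact ⟨C₃, h₃, hxC₃, hyC₃, hC₃s.trans Set.diff_subset⟩
    have hC₃C₂ : (C₃ ∩ (C₂ \ C₁)).Nonempty := by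
      rw [Set.nonempty_iff_ne_empty]
      intro hcon
      have hsub : C₃ ⊆ C₁ \ {e} := by
        intro z hz
        have hz' := hC₃s hz
        have : z ∉ C₂ \ C₁ := fun h => (Set.eq_empty_iff_forall_notMem.1 hcon z) ⟨hz, h⟩
        rcases hz'.1 with h | h
        · exact ⟨h, hz'.2⟩
        · exact ⟨by_contra fun h' => this ⟨h, h'⟩, hz'.2⟩
      have hss : C₃ ⊂ C₁ := hsub.trans_ssubset (sdiff_singleton_ssubset.2 he.1)
      exact h₃.2.1 (h₁.2.2 _ hss)
    obtain ⟨C₄, h₄, hyC₄, hC₄s⟩ := strong_elim hfin h₂ h₁ ⟨he.2, he.1⟩ ⟨hy, hyC₁⟩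
    rw [Set.union_comm] at hC₄s
    by_cases hxC₄ : x ∈ C₄
    · exact ⟨C₄, h₄, hxC₄, hyC₄, hC₄s.trans Set.diff_subset⟩
    have hC₄C₁ : (C₄ ∩ (C₁ \ C₂)).Nonempty := by
      rw [Set.nonempty_iff_ne_empty]
      intro hcon
      have hsub : C₄ ⊆ C₂ \ {e} := by
        intro z hz
        have hz' := hC₄s hz
        have : z ∉ C₁ \ C₂ := fun h => (Set.eq_empty_iff_forall_notMem.1 hcon z) ⟨hz, h⟩
        rcases hz'.1 with h | h
        · exact ⟨by_contra fun h' => this ⟨h, h'⟩, hz'.2⟩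
        · exact ⟨h, hz'.2⟩
      have hss : C₄ ⊂ C₂ := hsub.trans_ssubset (sdiff_singleton_ssubset.2 he.2)
      exact h₄.2.1 (h₂.2.2 _ hss)
    by_cases h32 : (C₃ ∪ C₂).ncard ≤ n
    · obtain ⟨g, hg⟩ := hC₃C₂
      obtain ⟨D, hD, hxD, hyD, hDs⟩ := ih C₃ C₂ h₃ h₂ ⟨g, hg.1, hg.2.1⟩ x hxC₃ y hy h32
      exact ⟨D, hD, hxD, hyD, hDs.trans
        (Set.union_subset (hC₃s.trans (Set.diff_subset)) Set.subset_union_right)⟩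
    by_cases h14 : (C₁ ∪ C₄).ncard ≤ n
    · obtain ⟨g, hg⟩ := hC₄C₁
      obtain ⟨D, hD, hxD, hyD, hDs⟩ := ih C₁ C₄ h₁ h₄ ⟨g, hg.2.1, hg.1⟩ x hx y hyC₄ h14
      exact ⟨D, hD, hxD, hyD, hDs.trans
        (Set.union_subset Set.subset_union_left (hC₄s.trans Set.diff_subset))⟩
    -- equality case
    have hU32 : C₃ ∪ C₂ = C₁ ∪ C₂ := by
      apply Set.eq_of_subset_of_ncard_le
      · exact Set.union_subset (hC₃s.trans Set.diff_subset) Set.subset_union_right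
      · omega
      · exact hfinU
    have hU14 : C₁ ∪ C₄ = C₁ ∪ C₂ := by
      apply Set.eq_of_subset_of_ncard_le
      · exact Set.union_subset Set.subset_union_left (hC₄s.trans Set.diff_subset)
      · omega
      · exact hfinU
    have h21sub : C₂ \ C₁ ⊆ C₄ := by
      intro z hz
      have : z ∈ C₁ ∪ C₄ := hU14 ▸ Set.mem_union_right _ hz.1
      exact this.resolve_left hz.2
    obtain ⟨g, hg⟩ := hC₃C₂
    have hgC₄ : g ∈ C₄ := h21sub hg.2
    have hsub34 : C₃ ∪ C₄ ⊆ (C₁ ∪ C₂) \ {e} :=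
      Set.union_subset hC₃s hC₄s
    have h34 : (C₃ ∪ C₄).ncard ≤ n := by
      have h1 : (C₃ ∪ C₄).ncard ≤ ((C₁ ∪ C₂) \ {e}).ncard :=
        Set.ncard_le_ncard hsub34 (hfinU.subset Set.diff_subset)
      have h2 : ((C₁ ∪ C₂) \ {e}).ncard < (C₁ ∪ C₂).ncard :=
        Set.ncard_diff_singleton_lt_of_mem (Set.mem_union_left _ he.1) hfinU
      omega
    obtain ⟨D, hD, hxD, hyD, hDs⟩ := ih C₃ C₄ h₃ h₄ ⟨g, hg.1, hgC₄⟩ x hxC₃ y hyC₄ h34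
    exact ⟨D, hD, hxD, hyD, hDs.trans (hsub34.trans Set.diff_subset)⟩

lemma union_circuit (hfin : M.E.Finite) (h₁ : Circuit M C₁) (h₂ : Circuit M C₂)
    (hne : (C₁ ∩ C₂).Nonempty) (hx : x ∈ C₁) (hy : y ∈ C₂) :
    ∃ D, Circuit M D ∧ x ∈ D ∧ y ∈ D ∧ D ⊆ C₁ ∪ C₂ :=
  union_circuit_aux hfin (C₁ ∪ C₂).ncard C₁ C₂ h₁ h₂ hne x hx y hy le_rfl

lemma attach_circuit (hfin : M.E.Finite) (hloop : ∀ e ∈ M.E, M.Indep {e})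
    (hC : Circuit M C) (hz : x ∈ M.closure C) (hzC : x ∉ C) :
    ∃ D, Circuit M D ∧ x ∈ D ∧ D ⊆ insert x C ∧ (D ∩ C).Nonempty := by
  obtain ⟨c₀, hc₀⟩ := circ_nonempty hC
  have hI : M.Indep (C \ {c₀}) := circ_indep_diff hC hc₀
  have hx' : x ∈ M.closure (C \ {c₀}) := (circ_closure_diff hC hc₀).symm ▸ hz
  have hxnI : x ∉ C \ {c₀} := fun h => hzC h.1
  obtain ⟨D, hD, hxD, hDs⟩ := fund_circuit hfin hI hx' hxnI
  have hDsub : D ⊆ insert x C := hDs.trans (Set.insert_subset_insert Set.diff_subset)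
  refine ⟨D, hD, hxD, hDsub, ?_⟩
  rw [Set.nonempty_iff_ne_empty]
  intro hcon
  have hDx : D = {x} := by
    apply subset_antisymm
    · intro z hz'
      rcases hDsub hz' with h | h
      · exact h
      · exact absurd ⟨hz', h⟩ (Set.eq_empty_iff_forall_notMem.1 hcon z)
    · exact Set.singleton_subset_iff.2 hxD
  exact hD.2.1 (hDx ▸ hloop x (M.closure_subset_ground C hz))

lemma closure_circuit_conn (hfin : M.E.Finite) (hloop : ∀ e ∈ M.E, M.Indep {e})
    (hC : Circuit M C) (hx : x ∈ M.closure C) (hy : y ∈ M.closure C) (hxy : x ≠ y) :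
    ∃ D, Circuit M D ∧ x ∈ D ∧ y ∈ D ∧ D ⊆ M.closure C := by
  have hCcl : C ⊆ M.closure C := M.subset_closure C hC.1
  by_cases hxC : x ∈ C <;> by_cases hyC : y ∈ C
  · exact ⟨C, hC, hxC, hyC, hCcl⟩
  · obtain ⟨Dy, hDy, hyDy, hDys, hDyC⟩ := attach_circuit hfin hloop hC hy hyC
    obtain ⟨g, hg⟩ := hDyC
    obtain ⟨D, hD, hxD, hyD, hDs⟩ := union_circuit hfin hC hDy ⟨g, hg.2, hg.1⟩ hxC hyDy
    exact ⟨D, hD, hxD, hyD, hDs.trans (Set.union_subset hCcl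
      (hDys.trans (Set.insert_subset hy hCcl)))⟩
  · obtain ⟨Dx, hDx, hxDx, hDxs, hDxC⟩ := attach_circuit hfin hloop hC hx hxC
    obtain ⟨g, hg⟩ := hDxC
    obtain ⟨D, hD, hyD, hxD, hDs⟩ := union_circuit hfin hC hDx ⟨g, hg.2, hg.1⟩ hyC hxDx
    exact ⟨D, hD, hxD, hyD, hDs.trans (Set.union_subset hCcl
      (hDxs.trans (Set.insert_subset hx hCcl)))⟩
  · obtain ⟨Dx, hDx, hxDx, hDxs, hDxC⟩ := attach_circuit hfin hloop hC hx hxC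
    obtain ⟨Dy, hDy, hyDy, hDys, hDyC⟩ := attach_circuit hfin hloop hC hy hyC
    obtain ⟨b, hb⟩ := hDyC
    obtain ⟨a, ha⟩ := hDxC
    obtain ⟨D', hD', hxD', hbD', hD's⟩ := union_circuit hfin hDx hC ⟨a, ha⟩ hxDx hb.2
    obtain ⟨D, hD, hxD, hyD, hDs⟩ := union_circuit hfin hD' hDy ⟨b, hbD', hb.1⟩ hxD' hyDy
    refine ⟨D, hD, hxD, hyD, hDs.trans ?_⟩
    refine Set.union_subset (hD's.trans (Set.union_subset ?_ hCcl))
      (hDys.trans (Set.insert_subset hy hCcl))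
    exact hDxs.trans (Set.insert_subset hx hCcl)

lemma flat_closure (M : Matroid α) (X : Set α) : M.IsFlat (M.closure X) := by
  rw [Matroid.closure_def, Set.sInter_eq_iInter]
  have hne : Nonempty {F // F ∈ {F | M.IsFlat F ∧ X ∩ M.E ⊆ F}} :=
    ⟨⟨M.E, M.ground_isFlat, Set.inter_subset_right⟩⟩
  exact Matroid.IsFlat.iInter (fun F => F.2.1)

lemma ntconnflat_closure (hfin : M.E.Finite) (hloop : ∀ e ∈ M.E, M.Indep {e})
    (hC : Circuit M C) : NTConnFlat M (M.closure C) := by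
  have hCcl : C ⊆ M.closure C := M.subset_closure C hC.1
  refine ⟨flat_closure M C, fun h => hC.2.1 (h.subset hCcl), ?_⟩
  intro x hx y hy hxy
  rw [Matroid.restrict_ground_eq] at hx hy
  obtain ⟨D, hD, hxD, hyD, hDs⟩ := closure_circuit_conn hfin hloop hC hx hy hxy
  refine ⟨D, ⟨?_, ?_, ?_⟩, hxD, hyD⟩
  · rw [Matroid.restrict_ground_eq]; exact hDs
  · rw [Matroid.restrict_indep_iff]; exact fun h => hD.2.1 h.1
  · intro D' hD'
    rw [Matroid.restrict_indep_iff]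
    exact ⟨hD.2.2 _ hD', hD'.subset.trans hDs⟩

lemma le_rk (hfin : M.E.Finite) {J : Set α} (hJ : M.Indep J) (hJF : J ⊆ F) :
    J.ncard ≤ rk M F := by
  show J.ncard ≤ sSup {n | ∃ I, I ⊆ F ∧ M.Indep I ∧ I.ncard = n}
  apply le_csSup
  · exact ⟨M.E.ncard, fun n ⟨I, _, hI, hn⟩ =>
      hn ▸ Set.ncard_le_ncard hI.subset_ground hfin⟩
  · exact ⟨J, hJF, hJ, rfl⟩

lemma rk_le {k : ℕ} (h : ∀ J, J ⊆ F → M.Indep J → J.ncard ≤ k) : rk M F ≤ k := by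
  show sSup {n | ∃ I, I ⊆ F ∧ M.Indep I ∧ I.ncard = n} ≤ k
  refine csSup_le ⟨0, ⟨∅, Set.empty_subset _, M.empty_indep, Set.ncard_empty α⟩⟩ ?_
  rintro n ⟨J, hJF, hJ, rfl⟩
  exact h J hJF hJ

lemma rk_closure_circuit_le (hfin : M.E.Finite) (hC : Circuit M C) :
    rk M (M.closure C) ≤ C.ncard - 1 := by
  obtain ⟨c₀, hc₀⟩ := circ_nonempty hC
  have hI : M.Indep (C \ {c₀}) := circ_indep_diff hC hc₀
  have hB : M.IsBasis (C \ {c₀}) (M.closure C) := by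
    have := hI.isBasis_closure
    rwa [circ_closure_diff hC hc₀] at this
  apply rk_le
  intro J hJF hJ
  obtain ⟨J', hJ', hJJ'⟩ := hJ.subset_isBasis_of_subset hJF (M.closure_subset_ground C)
  have hcard : J'.ncard = (C \ {c₀}).ncard :=
    (hJ'.isBase_restrict).ncard_eq_ncard_of_isBase (hB.isBase_restrict)
  have h1 : J.ncard ≤ J'.ncard :=
    Set.ncard_le_ncard hJJ' (hfin.subset hJ'.indep.subset_ground)
  have h2 : (C \ {c₀}).ncard = C.ncard - 1 :=
    Set.ncard_diff_singleton_of_mem hc₀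
  omega

lemma indep_char (hfin : M.E.Finite) (hloop : ∀ e ∈ M.E, M.Indep {e}) (I : Set α) :
    M.Indep I ↔ I ⊆ M.E ∧ ∀ F, NTConnFlat M F → (I ∩ F).ncard ≤ rk M F := by
  constructor
  · intro h
    exact ⟨h.subset_ground, fun F _ =>
      le_rk hfin (h.subset Set.inter_subset_left) Set.inter_subset_right⟩
  · rintro ⟨hIE, h⟩
    by_contra hdep
    obtain ⟨C, hCI, hC⟩ := exists_circuit hfin hIE hdep
    have hF := ntconnflat_closure hfin hloop hC
    have h1 := h _ hF
    have hCsub : C ⊆ I ∩ M.closure C :=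
      Set.subset_inter hCI (M.subset_closure C hC.1)
    have h2 : C.ncard ≤ (I ∩ M.closure C).ncard :=
      Set.ncard_le_ncard hCsub (hfin.subset (Set.inter_subset_left.trans hIE))
    have h3 := rk_closure_circuit_le hfin hC
    have h4 : 0 < C.ncard := (Set.ncard_pos (hfin.subset hC.1)).2 (circ_nonempty hC)
    omega

end Stmt4Aux

open LPM in
/-- Two loopless finite matroids on the same ground set having
the same nontrivial connected flats, with the same ranks, have the same
circuits, and hence are equal. -/
theorem stmt4 {α : Type*} (M M' : Matroid α) (hE : M.E = M'.E) (hfin : M.E.Finite)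
    (hloop : ∀ e ∈ M.E, M.Indep {e}) (hloop' : ∀ e ∈ M'.E, M'.Indep {e})
    (hflats : ∀ F : Set α, NTConnFlat M F ↔ NTConnFlat M' F)
    (hranks : ∀ F : Set α, NTConnFlat M F → rk M F = rk M' F) :
    (∀ C : Set α, Circuit M C ↔ Circuit M' C) ∧ M = M' := by
  
  have hfin' : M'.E.Finite := hE ▸ hfin
  have hiff : ∀ I, M.Indep I ↔ M'.Indep I := by
    intro I
    rw [indep_char hfin hloop, indep_char hfin' hloop', hE]
    constructor
    · rintro ⟨h1, h2⟩
      refine ⟨h1, fun F hF => ?_⟩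
      have hMF := (hflats F).2 hF
      exact (hranks F hMF) ▸ h2 F hMF
    · rintro ⟨h1, h2⟩
      refine ⟨h1, fun F hF => ?_⟩
      exact (hranks F hF) ▸ h2 F ((hflats F).1 hF)
  have heq : M = M' := Matroid.ext_indep hE (fun I _ => hiff I)
  exact ⟨fun C => heq ▸ Iff.rfl, heq⟩
end

section
/- Let m ≥ 1 and r ≥ 1 and let (N_1,…,N_r), N_i = [l_i, g_i] ⊆ {1,…,m+r}, be a lattice path presentation. Then there exists a lattice path presentation (N′_1,…,N′_m) of m intervals in {1,…,m+r} such that the dual matroid M[N]* equals M[N′]; equivalently, the complements {1,…,m+r} ∖ B of the bases B of M[N] are exactly the m-element sets {c_1 < c_2 < ⋯ < c_m} with c_j ∈ N′_j for all j. -/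
open Set
open scoped Matroid

namespace LPMAux
open LPM


/-- ncard of an initial segment of `Fin ρ`. -/
lemma ncard_fin_lt (ρ t : ℕ) : ({j : Fin ρ | (j : ℕ) < t} : Set (Fin ρ)).ncard = min t ρ := by
  rcases le_or_gt ρ t with h | h
  · have : ({j : Fin ρ | (j : ℕ) < t} : Set (Fin ρ)) = Set.univ := by
      ext j; simpa using lt_of_lt_of_le j.isLt h
    rw [this, Set.ncard_univ, Nat.card_eq_fintype_card, Fintype.card_fin, min_eq_right h]
  · have : ({j : Fin ρ | (j : ℕ) < t} : Set (Fin ρ)) = ↑(Finset.Iio (⟨t, h⟩ : Fin ρ)) := by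
      ext j; simp [Fin.lt_def]
    rw [this, Set.ncard_coe_finset, Fin.card_Iio, min_eq_left h.le]

variable {μ ρ : ℕ}

noncomputable def cnt (X : Set ℕ) (k : ℕ) : ℕ := (X ∩ Set.Icc 1 k).ncard

noncomputable def acnt (Q : LPP μ ρ) (k : ℕ) : ℕ := ({i : Fin ρ | Q.l i ≤ k} : Set (Fin ρ)).ncard
noncomputable def bcnt (Q : LPP μ ρ) (k : ℕ) : ℕ := ({i : Fin ρ | Q.g i ≤ k} : Set (Fin ρ)).ncard

lemma strictMono_fin_ge {f : Fin ρ → ℕ} (hf : StrictMono f) (h1 : ∀ i, 1 ≤ f i) :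
    ∀ i : Fin ρ, (i : ℕ) + 1 ≤ f i := by
  intro i
  induction' hi : (i : ℕ) with n ih generalizing i
  · exact h1 i
  · have hn : n < ρ := by omega
    have : f ⟨n, hn⟩ < f i := hf (by simp [Fin.lt_def, hi])
    have := ih ⟨n, hn⟩ rfl
    simp at this ⊢; omega

/-- card bound via injective map into `Icc 1 k`. -/
lemma ncard_le_of_strictMono {f : Fin ρ → ℕ} (hf : StrictMono f) (h1 : ∀ i, 1 ≤ f i) (k : ℕ) :
    ({i : Fin ρ | f i ≤ k} : Set (Fin ρ)).ncard ≤ k := by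
  have hmap : f '' {i : Fin ρ | f i ≤ k} ⊆ Set.Icc 1 k := by
    rintro x ⟨i, hi, rfl⟩; exact ⟨h1 i, hi⟩
  have h1' : (f '' {i : Fin ρ | f i ≤ k}).ncard = ({i : Fin ρ | f i ≤ k} : Set (Fin ρ)).ncard :=
    Set.ncard_image_of_injective _ hf.injective
  have h2 : (f '' {i : Fin ρ | f i ≤ k}).ncard ≤ (Set.Icc 1 k : Set ℕ).ncard :=
    Set.ncard_le_ncard hmap (by rw [← Finset.coe_Icc]; exact (Finset.Icc 1 k).finite_toSet)
  have h3 : (Set.Icc 1 k : Set ℕ).ncard = k := by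
    rw [← Finset.coe_Icc, Set.ncard_coe_finset, Nat.card_Icc]; omega
  omega

lemma acnt_le (Q : LPP μ ρ) (k : ℕ) : acnt Q k ≤ k :=
  ncard_le_of_strictMono Q.l_strictMono Q.one_le_l k

lemma bcnt_le (Q : LPP μ ρ) (k : ℕ) : bcnt Q k ≤ k :=
  ncard_le_of_strictMono Q.g_strictMono (fun i => le_trans (Q.one_le_l i) (Q.l_le_g i)) k

lemma bcnt_le_acnt (Q : LPP μ ρ) (k : ℕ) : bcnt Q k ≤ acnt Q k :=
  Set.ncard_le_ncard (fun i hi => le_trans (Q.l_le_g i) hi) (Set.toFinite _)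

lemma acnt_mono (Q : LPP μ ρ) {k k' : ℕ} (h : k ≤ k') : acnt Q k ≤ acnt Q k' :=
  Set.ncard_le_ncard (fun i hi => le_trans hi h) (Set.toFinite _)

lemma bcnt_mono (Q : LPP μ ρ) {k k' : ℕ} (h : k ≤ k') : bcnt Q k ≤ bcnt Q k' :=
  Set.ncard_le_ncard (fun i hi => le_trans hi h) (Set.toFinite _)

lemma acnt_le_card (Q : LPP μ ρ) (k : ℕ) : acnt Q k ≤ ρ := by
  have := Set.ncard_le_ncard (Set.subset_univ ({i : Fin ρ | Q.l i ≤ k} : Set (Fin ρ)))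
    (Set.finite_univ)
  simpa [acnt, Set.ncard_univ] using this

lemma bcnt_le_card (Q : LPP μ ρ) (k : ℕ) : bcnt Q k ≤ ρ := by
  have := Set.ncard_le_ncard (Set.subset_univ ({i : Fin ρ | Q.g i ≤ k} : Set (Fin ρ)))
    (Set.finite_univ)
  simpa [bcnt, Set.ncard_univ] using this

lemma acnt_top (Q : LPP μ ρ) {k : ℕ} (h : μ + ρ ≤ k) : acnt Q k = ρ := by
  have : ({i : Fin ρ | Q.l i ≤ k} : Set (Fin ρ)) = Set.univ := by
    ext i; simpa using le_trans (le_trans (Q.l_le_g i) (Q.g_le i)) h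
  rw [acnt, this, Set.ncard_univ, Nat.card_eq_fintype_card, Fintype.card_fin]

lemma bcnt_top (Q : LPP μ ρ) {k : ℕ} (h : μ + ρ ≤ k) : bcnt Q k = ρ := by
  have : ({i : Fin ρ | Q.g i ≤ k} : Set (Fin ρ)) = Set.univ := by
    ext i; simpa using le_trans (Q.g_le i) h
  rw [bcnt, this, Set.ncard_univ, Nat.card_eq_fintype_card, Fintype.card_fin]

lemma acnt_step (Q : LPP μ ρ) (k : ℕ) : acnt Q (k + 1) ≤ acnt Q k + 1 := by
  classical
  have hsub : ({i : Fin ρ | Q.l i ≤ k + 1} : Set (Fin ρ)) ⊆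
      ({i : Fin ρ | Q.l i ≤ k} : Set (Fin ρ)) ∪ {i | Q.l i = k + 1} := by
    intro i hi
    have hi' : Q.l i ≤ k + 1 := hi
    rcases eq_or_lt_of_le hi' with h | h
    · exact Or.inr h
    · exact Or.inl (by simpa using Nat.lt_succ_iff.mp h)
  have hcard1 : ({i : Fin ρ | Q.l i = k + 1} : Set (Fin ρ)).ncard ≤ 1 :=
    (Set.ncard_le_one (Set.toFinite _)).mpr
      (fun a ha b hb => Q.l_strictMono.injective (by simp at ha hb; omega))
  calc acnt Q (k+1) ≤ (({i : Fin ρ | Q.l i ≤ k} : Set (Fin ρ)) ∪ {i | Q.l i = k + 1}).ncard :=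
        Set.ncard_le_ncard hsub (Set.toFinite _)
    _ ≤ acnt Q k + 1 := le_trans (Set.ncard_union_le _ _) (by exact Nat.add_le_add le_rfl hcard1)

lemma bcnt_step (Q : LPP μ ρ) (k : ℕ) : bcnt Q (k + 1) ≤ bcnt Q k + 1 := by
  classical
  have hsub : ({i : Fin ρ | Q.g i ≤ k + 1} : Set (Fin ρ)) ⊆
      ({i : Fin ρ | Q.g i ≤ k} : Set (Fin ρ)) ∪ {i | Q.g i = k + 1} := by
    intro i hi
    have hi' : Q.g i ≤ k + 1 := hi
    rcases eq_or_lt_of_le hi' with h | h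
    · exact Or.inr h
    · exact Or.inl (by simpa using Nat.lt_succ_iff.mp h)
  have hcard1 : ({i : Fin ρ | Q.g i = k + 1} : Set (Fin ρ)).ncard ≤ 1 :=
    (Set.ncard_le_one (Set.toFinite _)).mpr
      (fun a ha b hb => Q.g_strictMono.injective (by simp at ha hb; omega))
  calc bcnt Q (k+1) ≤ (({i : Fin ρ | Q.g i ≤ k} : Set (Fin ρ)) ∪ {i | Q.g i = k + 1}).ncard :=
        Set.ncard_le_ncard hsub (Set.toFinite _)
    _ ≤ bcnt Q k + 1 := le_trans (Set.ncard_union_le _ _) (by exact Nat.add_le_add le_rfl hcard1)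


variable {μ ρ : ℕ}

lemma cross (Q : LPP μ ρ) {i j : Fin ρ} {x y : ℕ} (hij : i ≤ j) (hyx : y ≤ x)
    (hx : x ∈ Q.N i) (hy : y ∈ Q.N j) : x ∈ Q.N j ∧ y ∈ Q.N i := by
  obtain ⟨hx1, hx2⟩ := hx; obtain ⟨hy1, hy2⟩ := hy
  exact ⟨⟨le_trans hy1 hyx, le_trans hx2 (Q.g_strictMono.monotone hij)⟩,
    ⟨le_trans (Q.l_strictMono.monotone hij) hy1, le_trans hyx hx2⟩⟩

lemma monoSel (Q : LPP μ ρ) :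
    ∀ n (I : Set ℕ), I.Finite → I.ncard = n → ∀ F : ℕ → Fin ρ, Set.InjOn F I →
      (∀ x ∈ I, x ∈ Q.N (F x)) →
      ∃ G : ℕ → Fin ρ, Set.InjOn G I ∧ (∀ x ∈ I, x ∈ Q.N (G x)) ∧
        (∀ x ∈ I, ∀ y ∈ I, x < y → G x < G y) ∧ (∀ x ∈ I, ∃ y ∈ I, G x = F y) := by
  intro n
  induction n with
  | zero =>
    intro I hI h0 F hF hFv
    refine ⟨F, hF, hFv, ?_, fun x hx => ⟨x, hx, rfl⟩⟩
    have : I = ∅ := (Set.ncard_eq_zero hI).mp h0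
    simp [this]
  | succ n ih =>
    intro I hI hcard F hF hFv
    classical
    have hne : I.Nonempty := Set.nonempty_of_ncard_ne_zero (by omega)
    have hneF : hI.toFinset.Nonempty := by rwa [Set.Finite.toFinset_nonempty]
    set x₀ := hI.toFinset.max' hneF with hx₀def
    have hx₀I : x₀ ∈ I := hI.mem_toFinset.mp (hI.toFinset.max'_mem hneF)
    have hx₀max : ∀ x ∈ I, x ≤ x₀ := fun x hx => hI.toFinset.le_max' x (hI.mem_toFinset.mpr hx)
    -- y₀ maximizes F over I
    have hneF2 : (hI.toFinset.image F).Nonempty := hneF.image F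
    obtain ⟨y₀, hy₀mem, hy₀eq⟩ := Finset.mem_image.mp ((hI.toFinset.image F).max'_mem hneF2)
    have hy₀I : y₀ ∈ I := hI.mem_toFinset.mp hy₀mem
    have hy₀max : ∀ x ∈ I, F x ≤ F y₀ := by
      intro x hx
      rw [hy₀eq]
      exact (hI.toFinset.image F).le_max' _ (Finset.mem_image_of_mem F (hI.mem_toFinset.mpr hx))
    set G₁ : ℕ → Fin ρ := (Equiv.swap (F x₀) (F y₀)) ∘ F with hG₁def
    have hG₁x₀ : G₁ x₀ = F y₀ := by simp [hG₁def]
    have hG₁y₀ : G₁ y₀ = F x₀ := by simp [hG₁def]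
    have hG₁inj : Set.InjOn G₁ I :=
      fun x hx y hy h => hF hx hy ((Equiv.swap (F x₀) (F y₀)).injective h)
    have hcross := cross Q (hy₀max x₀ hx₀I) (hx₀max y₀ hy₀I) (hFv x₀ hx₀I) (hFv y₀ hy₀I)
    have hG₁cases : ∀ x ∈ I, G₁ x = F x ∨ x = x₀ ∨ x = y₀ := by
      intro x hx
      by_cases h1 : F x = F x₀
      · exact Or.inr (Or.inl (hF hx hx₀I h1))
      by_cases h2 : F x = F y₀
      · exact Or.inr (Or.inr (hF hx hy₀I h2))
      · exact Or.inl (by simp [hG₁def, Equiv.swap_apply_of_ne_of_ne h1 h2])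
    have hG₁v : ∀ x ∈ I, x ∈ Q.N (G₁ x) := by
      intro x hx
      rcases hG₁cases x hx with h | h | h
      · rw [h]; exact hFv x hx
      · rw [h, hG₁x₀]; exact hcross.1
      · rw [h, hG₁y₀]; exact hcross.2
    have hG₁val : ∀ x ∈ I, ∃ y ∈ I, G₁ x = F y := by
      intro x hx
      rcases hG₁cases x hx with h | h | h
      · exact ⟨x, hx, h⟩
      · exact ⟨y₀, hy₀I, by rw [h, hG₁x₀]⟩
      · exact ⟨x₀, hx₀I, by rw [h, hG₁y₀]⟩
    have hG₁bd : ∀ x ∈ I, G₁ x ≤ F y₀ := by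
      intro x hx
      obtain ⟨y, hy, hGy⟩ := hG₁val x hx
      rw [hGy]; exact hy₀max y hy
    -- restrict to I'
    set I' : Set ℕ := I \ {x₀} with hI'def
    have hI'fin : I'.Finite := hI.diff
    have hI'card : I'.ncard = n := by
      rw [hI'def, Set.ncard_diff_singleton_of_mem hx₀I, hcard]
      omega
    have hI'sub : I' ⊆ I := Set.diff_subset
    obtain ⟨G₂, hG₂inj, hG₂v, hG₂mono, hG₂val⟩ := ih I' hI'fin hI'card G₁
      (hG₁inj.mono hI'sub) (fun x hx => hG₁v x (hI'sub hx))
    have hG₂lt : ∀ x ∈ I', G₂ x < F y₀ := by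
      intro x hx
      obtain ⟨y, hy, hGy⟩ := hG₂val x hx
      have hyx₀ : y ≠ x₀ := by
        intro h
        exact hy.2 (by simp [h])
      have : G₁ y ≠ F y₀ := by
        rw [← hG₁x₀]
        exact fun h => hyx₀ (hG₁inj (hI'sub hy) hx₀I h)
      exact hGy ▸ lt_of_le_of_ne (hG₁bd y (hI'sub hy)) this
    refine ⟨fun x => if x = x₀ then F y₀ else G₂ x, ?_, ?_, ?_, ?_⟩
    · intro x hx y hy h
      by_cases hx1 : x = x₀
      · by_cases hy1 : y = x₀
        · rw [hx1, hy1]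
        · simp only [if_pos hx1, if_neg hy1] at h
          exact absurd h.symm (ne_of_lt (hG₂lt y ⟨hy, hy1⟩))
      · by_cases hy1 : y = x₀
        · simp only [if_neg hx1, if_pos hy1] at h
          exact absurd h (ne_of_lt (hG₂lt x ⟨hx, hx1⟩))
        · simp only [if_neg hx1, if_neg hy1] at h
          exact hG₂inj ⟨hx, hx1⟩ ⟨hy, hy1⟩ h
    · intro x hx
      by_cases hx1 : x = x₀
      · rw [hx1]; simpa using hcross.1
      · simpa [hx1] using hG₂v x ⟨hx, hx1⟩
    · intro x hx y hy hxy
      by_cases hy1 : y = x₀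
      · have hx1 : x ≠ x₀ := by
          intro h; rw [h, hy1] at hxy; exact lt_irrefl _ hxy
        simp only [if_pos hy1, if_neg hx1]
        exact hG₂lt x ⟨hx, hx1⟩
      · have hx1 : x ≠ x₀ := by
          intro h; subst h; exact absurd (hx₀max y hy) (by omega)
        simp only [hx1, hy1, if_false]
        exact hG₂mono x ⟨hx, hx1⟩ y ⟨hy, hy1⟩ hxy
    · intro x hx
      by_cases hx1 : x = x₀
      · exact ⟨y₀, hy₀I, by simp [hx1]⟩
      · obtain ⟨y, hy, hGy⟩ := hG₂val x ⟨hx, hx1⟩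
        obtain ⟨z, hz, hGz⟩ := hG₁val y (hI'sub hy)
        exact ⟨z, hz, by simp [hx1, hGy, hGz]⟩

/-! ### Full transversals -/

def FullT (Q : LPP μ ρ) (X : Set ℕ) : Prop :=
  ∃ e : Fin ρ → ℕ, StrictMono e ∧ Set.range e = X ∧ ∀ i, Q.l i ≤ e i ∧ e i ≤ Q.g i

lemma FullT.subset_Icc {Q : LPP μ ρ} {X : Set ℕ} (h : FullT Q X) : X ⊆ Set.Icc 1 (μ + ρ) := by
  obtain ⟨e, he, hrange, hb⟩ := h
  rintro x hx
  rw [← hrange] at hx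
  obtain ⟨i, rfl⟩ := hx
  exact ⟨le_trans (Q.one_le_l i) (hb i).1, le_trans (hb i).2 (Q.g_le i)⟩

lemma FullT.ncard_eq {Q : LPP μ ρ} {X : Set ℕ} (h : FullT Q X) : X.ncard = ρ := by
  obtain ⟨e, he, hrange, hb⟩ := h
  rw [← hrange, ← Set.image_univ, Set.ncard_image_of_injective _ he.injective,
    Set.ncard_univ, Nat.card_eq_fintype_card, Fintype.card_fin]

lemma FullT.isPT {Q : LPP μ ρ} {X : Set ℕ} (h : FullT Q X) : IsPT Q.N X := by
  classical
  obtain ⟨e, he, hrange, hb⟩ := h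
  have hx : ∀ x : X, ∃ i, e i = (x : ℕ) := by
    intro x
    have hx2 : (x : ℕ) ∈ Set.range e := by rw [hrange]; exact x.2
    exact hx2
  choose f hf using hx
  refine ⟨f, ?_, ?_⟩
  · intro x y hxy
    have : (x : ℕ) = y := by rw [← hf x, ← hf y, hxy]
    exact Subtype.ext this
  · intro x
    have := hb (f x)
    rw [hf x] at this
    exact this

lemma isPT_mono {ι α : Type*} {N : ι → Set α} {X Y : Set α} (h : IsPT N X) (hYX : Y ⊆ X) :
    IsPT N Y := by
  obtain ⟨f, hinj, hv⟩ := h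
  exact ⟨fun y => f (Set.inclusion hYX y), fun a b hab =>
    Set.inclusion_injective hYX (hinj hab), fun y => hv (Set.inclusion hYX y)⟩

lemma isPT_ncard_le {Q : LPP μ ρ} {X : Set ℕ} (h : IsPT Q.N X) (hfin : X.Finite) :
    X.ncard ≤ ρ := by
  obtain ⟨f, hinj, -⟩ := h
  have : Nat.card X ≤ Nat.card (Fin ρ) := by
    have : Finite (Fin ρ) := inferInstance
    exact Nat.card_le_card_of_injective f hinj
  simpa [Nat.card_coe_set_eq, Nat.card_eq_fintype_card] using this

lemma isPT_total {m : ℕ} {N : Fin m → Set ℕ} (hm : 0 < m) {I : Set ℕ} (h : IsPT N I) :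
    ∃ F : ℕ → Fin m, Set.InjOn F I ∧ ∀ x ∈ I, x ∈ N (F x) := by
  classical
  obtain ⟨f, hinj, hv⟩ := h
  refine ⟨fun x => if hx : x ∈ I then f ⟨x, hx⟩ else ⟨0, hm⟩, ?_, ?_⟩
  · intro x hx y hy hxy
    simp only [dif_pos hx, dif_pos hy] at hxy
    exact congrArg Subtype.val (hinj hxy)
  · intro x hx
    simp only [dif_pos hx]
    exact hv ⟨x, hx⟩

lemma isPT_of_total {m : ℕ} {N : Fin m → Set ℕ} {I : Set ℕ} (F : ℕ → Fin m)
    (hinj : Set.InjOn F I) (hv : ∀ x ∈ I, x ∈ N (F x)) : IsPT N I :=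
  ⟨fun x => F x, fun a b hab => Subtype.ext (hinj a.2 b.2 hab), fun x => hv x x.2⟩

/-! ### Counting -/

lemma range_inter_Icc {e : Fin ρ → ℕ} (h1 : ∀ i, 1 ≤ e i) (k : ℕ) :
    Set.range e ∩ Set.Icc 1 k = e '' {i : Fin ρ | e i ≤ k} := by
  ext x
  constructor
  · rintro ⟨⟨i, rfl⟩, -, hx2⟩
    exact ⟨i, hx2, rfl⟩
  · rintro ⟨i, hi, rfl⟩
    exact ⟨⟨i, rfl⟩, h1 i, hi⟩

lemma cnt_range {e : Fin ρ → ℕ} (he : Function.Injective e) (h1 : ∀ i, 1 ≤ e i) (k : ℕ) :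
    cnt (Set.range e) k = ({i : Fin ρ | e i ≤ k} : Set (Fin ρ)).ncard := by
  rw [cnt, range_inter_Icc h1, Set.ncard_image_of_injective _ he]

lemma ncard_Icc_nat (a b : ℕ) : (Set.Icc a b).ncard = b + 1 - a := by
  rw [← Finset.coe_Icc, Set.ncard_coe_finset, Nat.card_Icc]

lemma ncard_Ico_nat (a b : ℕ) : (Set.Ico a b).ncard = b - a := by
  rw [← Finset.coe_Ico, Set.ncard_coe_finset, Nat.card_Ico]

lemma cnt_le_ncard {X : Set ℕ} (hfin : X.Finite) (k : ℕ) : cnt X k ≤ X.ncard :=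
  Set.ncard_le_ncard Set.inter_subset_left hfin

lemma cnt_eq_ncard {X : Set ℕ} {n k : ℕ} (hX : X ⊆ Set.Icc 1 n) (h : n ≤ k) :
    cnt X k = X.ncard := by
  rw [cnt, Set.inter_eq_self_of_subset_left]
  intro x hx
  obtain ⟨h1, h2⟩ := hX hx
  exact ⟨h1, le_trans h2 h⟩

lemma cnt_add {B : Set ℕ} {n : ℕ} (hB : B ⊆ Set.Icc 1 n) {k : ℕ} (hk : k ≤ n) :
    cnt B k + cnt (Set.Icc 1 n \ B) k = k := by
  have hdisj : Disjoint (B ∩ Set.Icc 1 k) ((Set.Icc 1 n \ B) ∩ Set.Icc 1 k) := by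
    rw [Set.disjoint_left]
    rintro x ⟨hx1, -⟩ ⟨⟨-, hx3⟩, -⟩
    exact hx3 hx1
  have hun : (B ∩ Set.Icc 1 k) ∪ ((Set.Icc 1 n \ B) ∩ Set.Icc 1 k) = Set.Icc 1 k := by
    ext x
    constructor
    · rintro (⟨-, h⟩ | ⟨-, h⟩) <;> exact h
    · intro hx
      by_cases hxB : x ∈ B
      · exact Or.inl ⟨hxB, hx⟩
      · exact Or.inr ⟨⟨⟨hx.1, le_trans hx.2 hk⟩, hxB⟩, hx⟩
  have := Set.ncard_union_eq hdisj
    ((Set.finite_Icc 1 k).subset Set.inter_subset_right)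
    ((Set.finite_Icc 1 k).subset Set.inter_subset_right)
  rw [hun] at this
  rw [cnt, cnt, ← this, ncard_Icc_nat]
  omega

lemma fullT_counting {Q : LPP μ ρ} {X : Set ℕ} (h : FullT Q X) (k : ℕ) :
    bcnt Q k ≤ cnt X k ∧ cnt X k ≤ acnt Q k := by
  obtain ⟨e, he, hrange, hb⟩ := h
  have h1 : ∀ i, 1 ≤ e i := fun i => le_trans (Q.one_le_l i) (hb i).1
  have hc : cnt X k = ({i : Fin ρ | e i ≤ k} : Set (Fin ρ)).ncard := by
    rw [← hrange]; exact cnt_range he.injective h1 k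
  constructor
  · rw [hc]
    exact Set.ncard_le_ncard (fun i hi => le_trans (hb i).2 hi) (Set.toFinite _)
  · rw [hc]
    exact Set.ncard_le_ncard (fun i hi => le_trans (hb i).1 hi) (Set.toFinite _)

lemma counting_fullT {Q : LPP μ ρ} {X : Set ℕ} (hX : X ⊆ Set.Icc 1 (μ + ρ))
    (hcard : X.ncard = ρ) (hcnt : ∀ k, bcnt Q k ≤ cnt X k ∧ cnt X k ≤ acnt Q k) :
    FullT Q X := by
  classical
  have hfin : X.Finite := (Set.finite_Icc 1 (μ + ρ)).subset hX
  have hc : hfin.toFinset.card = ρ := by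
    rw [← Set.ncard_eq_toFinset_card X hfin]; exact hcard
  set iso := hfin.toFinset.orderIsoOfFin hc with hiso
  set e : Fin ρ → ℕ := fun i => (iso i : ℕ) with he_def
  have heX : ∀ i, e i ∈ X := fun i => hfin.mem_toFinset.mp (iso i).2
  have he : StrictMono e := by
    intro i j hij
    exact (Finset.orderIsoOfFin _ hc).lt_iff_lt.mpr hij
  have h1 : ∀ i, 1 ≤ e i := fun i => (hX (heX i)).1
  have hrange : Set.range e = X := by
    apply Set.eq_of_subset_of_ncard_le
    · rintro x ⟨i, rfl⟩; exact heX i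
    · rw [hcard, ← Set.image_univ, Set.ncard_image_of_injective _ he.injective,
        Set.ncard_univ, Nat.card_eq_fintype_card, Fintype.card_fin]
    · exact hfin
  have hcX : ∀ k, cnt X k = ({i : Fin ρ | e i ≤ k} : Set (Fin ρ)).ncard := by
    intro k; rw [← hrange]; exact cnt_range he.injective h1 k
  refine ⟨e, he, hrange, fun i => ⟨?_, ?_⟩⟩
  · by_contra hcon
    push_neg at hcon
    set k := e i with hk
    have hlow : (i : ℕ) + 1 ≤ cnt X k := by
      rw [hcX k]
      have hsub : ({j : Fin ρ | (j : ℕ) < (i : ℕ) + 1} : Set (Fin ρ)) ⊆ {j | e j ≤ k} := by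
        intro j hj
        have : j ≤ i := by
          have : (j : ℕ) < (i : ℕ) + 1 := hj
          exact Fin.le_def.mpr (by omega)
        exact he.monotone this
      have := Set.ncard_le_ncard hsub (Set.toFinite _)
      rw [ncard_fin_lt, min_eq_left (show (i : ℕ) + 1 ≤ ρ from i.isLt)] at this
      exact this
    have hup : acnt Q k ≤ (i : ℕ) := by
      have hsub : ({j : Fin ρ | Q.l j ≤ k} : Set (Fin ρ)) ⊆ {j | (j : ℕ) < (i : ℕ)} := by
        intro j hj
        by_contra hcon2
        simp only [Set.mem_setOf_eq, not_lt] at hcon2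
        have hij : i ≤ j := Fin.le_def.mpr hcon2
        have : Q.l i ≤ Q.l j := Q.l_strictMono.monotone hij
        have : Q.l i ≤ k := le_trans this hj
        omega
      have := Set.ncard_le_ncard hsub (Set.toFinite _)
      rw [ncard_fin_lt] at this
      exact le_trans this (min_le_left _ _)
    have := (hcnt k).2
    omega
  · by_contra hcon
    push_neg at hcon
    set k := e i - 1 with hk
    have hgk : Q.g i ≤ k := by omega
    have hlow : (i : ℕ) + 1 ≤ bcnt Q k := by
      have hsub : ({j : Fin ρ | (j : ℕ) < (i : ℕ) + 1} : Set (Fin ρ)) ⊆ {j | Q.g j ≤ k} := by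
        intro j hj
        have hji : j ≤ i := by
          have : (j : ℕ) < (i : ℕ) + 1 := hj
          exact Fin.le_def.mpr (by omega)
        exact le_trans (Q.g_strictMono.monotone hji) hgk
      have := Set.ncard_le_ncard hsub (Set.toFinite _)
      rw [ncard_fin_lt, min_eq_left (show (i : ℕ) + 1 ≤ ρ from i.isLt)] at this
      exact this
    have hup : cnt X k ≤ (i : ℕ) := by
      rw [hcX k]
      have hsub : ({j : Fin ρ | e j ≤ k} : Set (Fin ρ)) ⊆ {j | (j : ℕ) < (i : ℕ)} := by
        intro j hj
        by_contra hcon2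
        simp only [Set.mem_setOf_eq, not_lt] at hcon2
        have hij : i ≤ j := Fin.le_def.mpr hcon2
        have : e i ≤ e j := he.monotone hij
        have hj' : e j ≤ k := hj
        omega
      have := Set.ncard_le_ncard hsub (Set.toFinite _)
      rw [ncard_fin_lt] at this
      exact le_trans this (min_le_left _ _)
    have := (hcnt k).1
    omega

/-! ### The dual presentation -/

variable {m r : ℕ}

noncomputable def betaF (P : LPP m r) (k : ℕ) : ℕ := k - bcnt P k
noncomputable def alphaF (P : LPP m r) (k : ℕ) : ℕ := k - acnt P k

lemma betaF_mono (P : LPP m r) : Monotone (betaF P) := by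
  apply monotone_nat_of_le_succ
  intro k
  have h1 := bcnt_step P k
  have h2 := bcnt_le P k
  show k - bcnt P k ≤ k + 1 - bcnt P (k + 1)
  omega

lemma alphaF_mono (P : LPP m r) : Monotone (alphaF P) := by
  apply monotone_nat_of_le_succ
  intro k
  have h1 := acnt_step P k
  have h2 := acnt_le P k
  show k - acnt P k ≤ k + 1 - acnt P (k + 1)
  omega

lemma betaF_step (P : LPP m r) (k : ℕ) : betaF P (k + 1) ≤ betaF P k + 1 := by
  have := bcnt_mono P (Nat.le_add_right k 1)
  have := bcnt_le P k
  simp only [betaF]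
  omega

lemma alphaF_step (P : LPP m r) (k : ℕ) : alphaF P (k + 1) ≤ alphaF P k + 1 := by
  have := acnt_mono P (Nat.le_add_right k 1)
  have := acnt_le P k
  simp only [alphaF]
  omega

lemma betaF_zero (P : LPP m r) : betaF P 0 = 0 := by simp [betaF]

lemma alphaF_zero (P : LPP m r) : alphaF P 0 = 0 := by simp [alphaF]

lemma betaF_top (P : LPP m r) {k : ℕ} (h : m + r ≤ k) : betaF P k = k - r := by
  rw [betaF, bcnt_top P h]

lemma alphaF_top (P : LPP m r) {k : ℕ} (h : m + r ≤ k) : alphaF P k = k - r := by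
  rw [alphaF, acnt_top P h]

lemma betaF_le (P : LPP m r) {k : ℕ} (h : k ≤ m + r) : betaF P k ≤ m := by
  have := betaF_mono P h
  rw [betaF_top P le_rfl] at this
  omega

lemma alphaF_le (P : LPP m r) {k : ℕ} (h : k ≤ m + r) : alphaF P k ≤ m := by
  have := alphaF_mono P h
  rw [alphaF_top P le_rfl] at this
  omega

lemma alphaF_le_betaF (P : LPP m r) (k : ℕ) : alphaF P k ≤ betaF P k := by
  have h1 := bcnt_le_acnt P k
  have h2 := acnt_le P k
  simp only [alphaF, betaF]
  omega

lemma betaF_ex (P : LPP m r) (j : Fin m) : ∃ k, (j : ℕ) + 1 ≤ betaF P k :=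
  ⟨m + r, by rw [betaF_top P le_rfl]; have := j.isLt; omega⟩

lemma alphaF_ex (P : LPP m r) (j : Fin m) : ∃ k, (j : ℕ) + 1 ≤ alphaF P k :=
  ⟨m + r, by rw [alphaF_top P le_rfl]; have := j.isLt; omega⟩

noncomputable def dl (P : LPP m r) (j : Fin m) : ℕ := Nat.find (betaF_ex P j)
noncomputable def dg (P : LPP m r) (j : Fin m) : ℕ := Nat.find (alphaF_ex P j)

lemma dl_le_iff (P : LPP m r) (j : Fin m) (k : ℕ) :
    dl P j ≤ k ↔ (j : ℕ) + 1 ≤ betaF P k := by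
  constructor
  · intro h
    exact le_trans (Nat.find_spec (betaF_ex P j)) (betaF_mono P h)
  · intro h
    exact Nat.find_le h

lemma dg_le_iff (P : LPP m r) (j : Fin m) (k : ℕ) :
    dg P j ≤ k ↔ (j : ℕ) + 1 ≤ alphaF P k := by
  constructor
  · intro h
    exact le_trans (Nat.find_spec (alphaF_ex P j)) (alphaF_mono P h)
  · intro h
    exact Nat.find_le h

lemma dl_pos (P : LPP m r) (j : Fin m) : 1 ≤ dl P j := by
  by_contra h
  push_neg at h
  have := (dl_le_iff P j 0).mp (by omega)
  rw [betaF_zero] at this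
  omega

lemma dg_pos (P : LPP m r) (j : Fin m) : 1 ≤ dg P j := by
  by_contra h
  push_neg at h
  have := (dg_le_iff P j 0).mp (by omega)
  rw [alphaF_zero] at this
  omega

lemma strict_aux {f : ℕ → ℕ} (hmono : Monotone f) (hstep : ∀ k, f (k + 1) ≤ f k + 1)
    {j j' : ℕ} (hjj : j < j') {d d' : ℕ}
    (hd_spec : j + 1 ≤ f d) (hd_min : ∀ k, k < d → ¬ (j + 1 ≤ f k))
    (hd'_spec : j' + 1 ≤ f d') (hd'_min : ∀ k, k < d' → ¬ (j' + 1 ≤ f k))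
    (hd_pos : 1 ≤ d) (hd'_pos : 1 ≤ d') : d < d' := by
  by_contra hcon
  push_neg at hcon
  have h1 : ¬ (j + 1 ≤ f (d' - 1)) := hd_min (d' - 1) (by omega)
  have h2 : f d' ≤ f (d' - 1) + 1 := by
    have := hstep (d' - 1)
    have he : d' - 1 + 1 = d' := by omega
    rwa [he] at this
  omega

lemma dl_strictMono (P : LPP m r) : StrictMono (dl P) := by
  intro j j' hjj
  exact strict_aux (betaF_mono P) (betaF_step P) (by exact_mod_cast hjj)
    (Nat.find_spec (betaF_ex P j)) (fun k hk => Nat.find_min (betaF_ex P j) hk)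
    (Nat.find_spec (betaF_ex P j')) (fun k hk => Nat.find_min (betaF_ex P j') hk)
    (dl_pos P j) (dl_pos P j')

lemma dg_strictMono (P : LPP m r) : StrictMono (dg P) := by
  intro j j' hjj
  exact strict_aux (alphaF_mono P) (alphaF_step P) (by exact_mod_cast hjj)
    (Nat.find_spec (alphaF_ex P j)) (fun k hk => Nat.find_min (alphaF_ex P j) hk)
    (Nat.find_spec (alphaF_ex P j')) (fun k hk => Nat.find_min (alphaF_ex P j') hk)
    (dg_pos P j) (dg_pos P j')

lemma dl_le_dg (P : LPP m r) (j : Fin m) : dl P j ≤ dg P j := by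
  rw [dl_le_iff]
  exact le_trans (Nat.find_spec (alphaF_ex P j)) (alphaF_le_betaF P _)

lemma dg_le_top (P : LPP m r) (j : Fin m) : dg P j ≤ r + m := by
  rw [dg_le_iff, alphaF_top P (by omega)]
  have := j.isLt
  omega

noncomputable def dualP (P : LPP m r) : LPP r m where
  l := dl P
  g := dg P
  l_strictMono := dl_strictMono P
  g_strictMono := dg_strictMono P
  one_le_l := dl_pos P
  l_le_g := dl_le_dg P
  g_le := dg_le_top P

lemma acnt_dual (P : LPP m r) (k : ℕ) : acnt (dualP P) k = min (betaF P k) m := by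
  have hset : ({j : Fin m | (dualP P).l j ≤ k} : Set (Fin m)) = {j : Fin m | (j : ℕ) < betaF P k} := by
    ext j
    simp only [Set.mem_setOf_eq]
    rw [show (dualP P).l j = dl P j from rfl, dl_le_iff]
    omega
  rw [acnt, hset, ncard_fin_lt]

lemma bcnt_dual (P : LPP m r) (k : ℕ) : bcnt (dualP P) k = min (alphaF P k) m := by
  have hset : ({j : Fin m | (dualP P).g j ≤ k} : Set (Fin m)) = {j : Fin m | (j : ℕ) < alphaF P k} := by
    ext j
    simp only [Set.mem_setOf_eq]
    rw [show (dualP P).g j = dg P j from rfl, dg_le_iff]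
    omega
  rw [bcnt, hset, ncard_fin_lt]

/-! ### Complement of a full transversal -/

lemma compl_fullT {P : LPP m r} {B : Set ℕ} (h : FullT P B) :
    FullT (dualP P) (Set.Icc 1 (m + r) \ B) := by
  have hBsub : B ⊆ Set.Icc 1 (m + r) := h.subset_Icc
  have hBcard : B.ncard = r := h.ncard_eq
  set C := Set.Icc 1 (m + r) \ B with hCdef
  have hCsub : C ⊆ Set.Icc 1 (m + r) := Set.diff_subset
  have hCfin : C.Finite := (Set.finite_Icc 1 (m + r)).subset hCsub
  have hCcard : C.ncard = m := by
    have hd : (Set.Icc 1 (m + r) \ B).ncard = (Set.Icc 1 (m + r)).ncard - B.ncard :=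
      Set.ncard_diff hBsub ((Set.finite_Icc 1 (m + r)).subset hBsub)
    rw [hCdef, hd, ncard_Icc_nat, hBcard]
    omega
  apply counting_fullT (by rw [add_comm r m]; exact hCsub) hCcard
  intro k
  rcases le_or_gt k (m + r) with hk | hk
  · have hadd := cnt_add hBsub hk
    rw [← hCdef] at hadd
    have hBc := fullT_counting h k
    have hcntle : cnt C k ≤ C.ncard := cnt_le_ncard hCfin k
    rw [hCcard] at hcntle
    rw [acnt_dual, bcnt_dual, min_eq_left (betaF_le P hk), min_eq_left (alphaF_le P hk)]
    have hbcle := bcnt_le P k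
    have hacle := acnt_le P k
    simp only [betaF, alphaF]
    omega
  · have hC : cnt C k = m := by rw [cnt_eq_ncard hCsub hk.le, hCcard]
    constructor
    · rw [hC, bcnt_dual]
      have := alphaF_le P (le_refl (m + r))
      omega
    · rw [hC, acnt_dual]
      have h1 : acnt (dualP P) (m + r) ≤ acnt (dualP P) k := acnt_mono _ hk.le
      rw [acnt_dual, betaF_top P le_rfl] at h1
      rw [← acnt_dual]
      omega

/-! ### Strictly monotone self-maps of `Fin` -/

lemma strictMono_fin_ge'' {ρ : ℕ} {f : Fin ρ → ℕ} (hf : StrictMono f) :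
    ∀ i : Fin ρ, (i : ℕ) ≤ f i := by
  intro i
  induction' hi : (i : ℕ) with n ih generalizing i
  · omega
  · have hn : n < ρ := by omega
    have h1 : f ⟨n, hn⟩ < f i := hf (by simp [Fin.lt_def, hi])
    have h2 := ih ⟨n, hn⟩ rfl
    change n ≤ f ⟨n, hn⟩ at h2
    omega

lemma fin_strictMono_id {n : ℕ} {f : Fin n → Fin n} (hf : StrictMono f) : ∀ i, f i = i := by
  have h1 : ∀ i : Fin n, (i : ℕ) ≤ (f i : ℕ) := by
    have : StrictMono (fun i => ((f i : ℕ))) := fun a b hab => by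
      exact_mod_cast hf hab
    exact fun i => strictMono_fin_ge'' this i
  have h2 : ∀ i : Fin n, ((f i : ℕ)) ≤ (i : ℕ) := by
    have hrev : StrictMono (fun i : Fin n => ((f i.rev).rev : ℕ)) := by
      intro a b hab
      have : b.rev < a.rev := Fin.rev_lt_rev.mpr hab
      have : f b.rev < f a.rev := hf this
      have := Fin.rev_lt_rev.mpr this
      exact_mod_cast this
    intro i
    have := strictMono_fin_ge'' hrev i.rev
    simp only [Fin.rev_rev] at this
    have hval : ((i.rev : ℕ)) ≤ ((f i).rev : ℕ) := this
    rw [Fin.val_rev, Fin.val_rev] at hval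
    have := i.isLt
    have := (f i).isLt
    omega
  intro i
  have := h1 i
  have := h2 i
  exact Fin.ext (by omega)

/-! ### Bases -/

lemma fullT_of_monoSel {Q : LPP μ ρ} {B : Set ℕ} (hB : B ⊆ Set.Icc 1 (μ + ρ))
    (hcard : B.ncard = ρ) {G : ℕ → Fin ρ}
    (hmono : ∀ x ∈ B, ∀ y ∈ B, x < y → G x < G y)
    (hval : ∀ x ∈ B, x ∈ Q.N (G x)) : FullT Q B := by
  classical
  have hfin : B.Finite := (Set.finite_Icc 1 (μ + ρ)).subset hB
  have hc : hfin.toFinset.card = ρ := by rw [← Set.ncard_eq_toFinset_card B hfin]; exact hcard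
  set iso := hfin.toFinset.orderIsoOfFin hc with hiso
  set e : Fin ρ → ℕ := fun i => (iso i : ℕ) with he_def
  have heX : ∀ i, e i ∈ B := fun i => hfin.mem_toFinset.mp (iso i).2
  have he : StrictMono e := fun i j hij => (Finset.orderIsoOfFin _ hc).lt_iff_lt.mpr hij
  have hGe : StrictMono (fun i => G (e i)) := by
    intro i j hij
    exact hmono (e i) (heX i) (e j) (heX j) (he hij)
  have hid : ∀ i, G (e i) = i := fin_strictMono_id hGe
  have hrange : Set.range e = B := by
    apply Set.eq_of_subset_of_ncard_le
    · rintro x ⟨i, rfl⟩; exact heX i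
    · rw [hcard, ← Set.image_univ, Set.ncard_image_of_injective _ he.injective,
        Set.ncard_univ, Nat.card_eq_fintype_card, Fintype.card_fin]
    · exact hfin
  refine ⟨e, he, hrange, fun i => ?_⟩
  have := hval (e i) (heX i)
  rw [hid i] at this
  exact this

lemma base_of_fullT {P : LPP m r} {M : Matroid ℕ} (hM : IsLPMOf P M) {B : Set ℕ}
    (h : FullT P B) : M.IsBase B := by
  have hindep : M.Indep B := (hM.2 B).mpr ⟨h.subset_Icc, FullT.isPT h⟩
  apply hindep.isBase_of_maximal
  intro J hJ hBJ
  obtain ⟨hJsub, hJpt⟩ := (hM.2 J).mp hJ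
  have hJfin : J.Finite := (Set.finite_Icc 1 (m + r)).subset hJsub
  have hJcard : J.ncard ≤ r := isPT_ncard_le hJpt hJfin
  exact Set.eq_of_subset_of_ncard_le hBJ (by rw [h.ncard_eq]; exact hJcard) hJfin

lemma fullT_of_base {P : LPP m r} {M : Matroid ℕ} (hM : IsLPMOf P M) (hr : 1 ≤ r)
    {B : Set ℕ} (h : M.IsBase B) : FullT P B := by
  have hindep : M.Indep B := h.indep
  obtain ⟨hBsub, hBpt⟩ := (hM.2 B).mp hindep
  have hBfin : B.Finite := (Set.finite_Icc 1 (m + r)).subset hBsub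
  -- the canonical base given by left endpoints
  have hB₀ : FullT P (Set.range P.l) :=
    ⟨P.l, P.l_strictMono, rfl, fun i => ⟨le_rfl, P.l_le_g i⟩⟩
  have hB₀base : M.IsBase (Set.range P.l) := base_of_fullT hM hB₀
  have hBcard : B.ncard = r := by
    rw [h.ncard_eq_ncard_of_isBase hB₀base, hB₀.ncard_eq]
  obtain ⟨F, hFinj, hFv⟩ := isPT_total (by omega) hBpt
  obtain ⟨G, hGinj, hGv, hGmono, -⟩ := monoSel P B.ncard B hBfin rfl F hFinj hFv
  exact fullT_of_monoSel hBsub hBcard hGmono hGv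

/-! ### Greedy construction of a base avoiding a dual partial transversal -/

open scoped Classical

lemma exA {n : ℕ} {I : Set ℕ} (hI : I ⊆ Set.Icc 1 n) (t : ℕ) : ∃ x, t ≤ x ∧ x ∉ I := by
  refine ⟨n + 1 + t, by omega, fun hx => ?_⟩
  have := hI hx
  simp only [Set.mem_Icc] at this
  omega

noncomputable def grd {n : ℕ} {I : Set ℕ} (hI : I ⊆ Set.Icc 1 n) (lo : ℕ → ℕ) : ℕ → ℕ :=
  fun i => Nat.rec (Nat.find (exA hI (lo 0)))
    (fun i prev => Nat.find (exA hI (max (lo (i + 1)) (prev + 1)))) i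

lemma grd_zero {n : ℕ} {I : Set ℕ} (hI : I ⊆ Set.Icc 1 n) (lo : ℕ → ℕ) :
    grd hI lo 0 = Nat.find (exA hI (lo 0)) := rfl

lemma grd_succ {n : ℕ} {I : Set ℕ} (hI : I ⊆ Set.Icc 1 n) (lo : ℕ → ℕ) (i : ℕ) :
    grd hI lo (i + 1) = Nat.find (exA hI (max (lo (i + 1)) (grd hI lo i + 1))) := rfl

lemma grd_not_mem {n : ℕ} {I : Set ℕ} (hI : I ⊆ Set.Icc 1 n) (lo : ℕ → ℕ) (i : ℕ) :
    grd hI lo i ∉ I := by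
  cases i with
  | zero => exact (Nat.find_spec (exA hI (lo 0))).2
  | succ i => exact (Nat.find_spec (exA hI (max (lo (i + 1)) (grd hI lo i + 1)))).2

lemma grd_lo {n : ℕ} {I : Set ℕ} (hI : I ⊆ Set.Icc 1 n) (lo : ℕ → ℕ) (i : ℕ) :
    lo i ≤ grd hI lo i := by
  cases i with
  | zero => exact (Nat.find_spec (exA hI (lo 0))).1
  | succ i =>
    exact le_trans (le_max_left _ _) (Nat.find_spec (exA hI (max (lo (i + 1)) (grd hI lo i + 1)))).1

lemma grd_strictMono {n : ℕ} {I : Set ℕ} (hI : I ⊆ Set.Icc 1 n) (lo : ℕ → ℕ) :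
    StrictMono (grd hI lo) := by
  apply strictMono_nat_of_lt_succ
  intro i
  have := (Nat.find_spec (exA hI (max (lo (i + 1)) (grd hI lo i + 1)))).1
  rw [grd_succ]
  omega

lemma grd_min_zero {n : ℕ} {I : Set ℕ} (hI : I ⊆ Set.Icc 1 n) (lo : ℕ → ℕ) {x : ℕ}
    (h1 : lo 0 ≤ x) (h2 : x < grd hI lo 0) : x ∈ I := by
  by_contra hx
  exact absurd ⟨h1, hx⟩ (Nat.find_min (exA hI (lo 0)) (by rw [grd_zero] at h2; exact h2))

lemma grd_min_succ {n : ℕ} {I : Set ℕ} (hI : I ⊆ Set.Icc 1 n) (lo : ℕ → ℕ) {i x : ℕ}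
    (h1 : lo (i + 1) ≤ x) (h1' : grd hI lo i < x) (h2 : x < grd hI lo (i + 1)) : x ∈ I := by
  by_contra hx
  refine absurd ⟨by omega, hx⟩
    (Nat.find_min (exA hI (max (lo (i + 1)) (grd hI lo i + 1))) ?_)
  rw [grd_succ] at h2
  exact h2

lemma greedy {P : LPP m r} (hr : 1 ≤ r) {I : Set ℕ} (hI : I ⊆ Set.Icc 1 (m + r))
    {F : ℕ → Fin m} (hFinj : Set.InjOn F I)
    (hFv : ∀ x ∈ I, (dualP P).l (F x) ≤ x ∧ x ≤ (dualP P).g (F x)) :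
    ∃ B : Set ℕ, FullT P B ∧ Disjoint B I := by
  classical
  set lo : ℕ → ℕ := fun i => if h : i < r then P.l ⟨i, h⟩ else 0 with hlo_def
  set b : ℕ → ℕ := grd hI lo with hb_def
  have hlo_eq : ∀ (i : ℕ) (hi : i < r), lo i = P.l ⟨i, hi⟩ := by
    intro i hi; simp [hlo_def, hi]
  have main : ∀ i, ∀ hi : i < r, (∀ i' (hi' : i' < r), i' < i → b i' ≤ P.g ⟨i', hi'⟩) →
      b i ≤ P.g ⟨i, hi⟩ := by
    intro i hi IH
    by_contra hgt
    push_neg at hgt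
    -- find the chain start i0
    set S : Finset ℕ := (Finset.range (i + 1)).filter
      (fun i0 => i0 = 0 ∨ (0 < i0 ∧ b (i0 - 1) < lo i0)) with hS_def
    have hS0 : (0 : ℕ) ∈ S := by
      simp [hS_def]
    have hSne : S.Nonempty := ⟨0, hS0⟩
    set i0 := S.max' hSne with hi0_def
    have hi0mem := S.max'_mem hSne
    have hi0le : i0 ≤ i := by
      have := Finset.mem_filter.mp hi0mem
      have := Finset.mem_range.mp this.1
      omega
    have hi0r : i0 < r := lt_of_le_of_lt hi0le hi
    have hstart : i0 = 0 ∨ (0 < i0 ∧ b (i0 - 1) < lo i0) := (Finset.mem_filter.mp hi0mem).2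
    have hchain : ∀ i', i0 < i' → i' ≤ i → lo i' ≤ b (i' - 1) := by
      intro i' h1 h2
      by_contra hcon
      push_neg at hcon
      have : i' ∈ S := by
        simp only [hS_def, Finset.mem_filter, Finset.mem_range]
        exact ⟨by omega, Or.inr ⟨by omega, hcon⟩⟩
      have := S.le_max' i' this
      omega
    -- coverage
    have cov : ∀ d, i0 + d ≤ i → ∀ x, lo i0 ≤ x → x < b (i0 + d) →
        x ∈ I ∨ ∃ t, i0 ≤ t ∧ t < i0 + d ∧ b t = x := by
      intro d
      induction d with
      | zero =>
        intro _ x hx1 hx2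
        left
        rw [Nat.add_zero] at hx2
        rcases hstart with h0 | ⟨hpos, hlt⟩
        · rw [h0] at hx1 hx2
          exact grd_min_zero hI lo hx1 hx2
        · obtain ⟨i0', hi0'⟩ : ∃ i0', i0 = i0' + 1 := ⟨i0 - 1, by omega⟩
          rw [hi0'] at hx1 hx2 hlt
          simp only [Nat.add_sub_cancel] at hlt
          exact grd_min_succ hI lo hx1 (lt_of_lt_of_le hlt hx1) hx2
      | succ d ihd =>
        intro hle x hx1 hx2
        rcases lt_trichotomy x (b (i0 + d)) with h | h | h
        · rcases ihd (by omega) x hx1 h with hin | ⟨t, ht1, ht2, ht3⟩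
          · exact Or.inl hin
          · exact Or.inr ⟨t, ht1, by omega, ht3⟩
        · exact Or.inr ⟨i0 + d, le_add_right le_rfl, by omega, h.symm⟩
        · left
          have hch : lo (i0 + d + 1) ≤ b (i0 + d) := by
            have := hchain (i0 + d + 1) (by omega) (by omega)
            simpa using this
          have : i0 + (d + 1) = (i0 + d) + 1 := by omega
          rw [this] at hx2
          exact grd_min_succ hI lo (by omega) h hx2
    -- the window
    set u := P.l ⟨i0, hi0r⟩ with hu_def
    set v := P.g ⟨i, hi⟩ with hv_def
    have huv : u ≤ v :=
      le_trans (P.l_le_g ⟨i0, hi0r⟩) (P.g_strictMono.monotone (by simp [Fin.le_def]; omega))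
    have hu1 : 1 ≤ u := P.one_le_l _
    have hlou : lo i0 = u := hlo_eq i0 hi0r
    set W : Set ℕ := Set.Icc u v with hW_def
    -- every element of W is in I or is a b-value with index in [i0, i)
    have hWcov : W ⊆ (I ∩ W) ∪ (b '' Set.Ico i0 i) := by
      intro x hx
      obtain ⟨hx1, hx2⟩ := hx
      have hxb : x < b i := by omega
      have : i = i0 + (i - i0) := by omega
      rw [this] at hxb
      rcases cov (i - i0) (by omega) x (by omega) hxb with hin | ⟨t, ht1, ht2, ht3⟩
      · exact Or.inl ⟨hin, hx1, hx2⟩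
      · exact Or.inr ⟨t, ⟨ht1, by omega⟩, ht3⟩
    have hWfin : W.Finite := Set.finite_Icc u v
    have hIWfin : (I ∩ W).Finite := hWfin.subset Set.inter_subset_right
    have hWcard : W.ncard = v + 1 - u := ncard_Icc_nat u v
    have hImlow : v + 1 - u ≤ (I ∩ W).ncard + (i - i0) := by
      have h1 : W.ncard ≤ ((I ∩ W) ∪ (b '' Set.Ico i0 i)).ncard :=
        Set.ncard_le_ncard hWcov ((hIWfin.union ((Set.finite_Ico i0 i).image b)))
      have h2 : ((I ∩ W) ∪ (b '' Set.Ico i0 i)).ncard ≤ (I ∩ W).ncard + (b '' Set.Ico i0 i).ncard :=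
        Set.ncard_union_le _ _
      have h3 : (b '' Set.Ico i0 i).ncard ≤ (Set.Ico i0 i).ncard :=
        Set.ncard_image_le (Set.finite_Ico i0 i)
      have h4 : (Set.Ico i0 i).ncard = i - i0 := ncard_Ico_nat i0 i
      omega
    -- upper bound on (I ∩ W).ncard via F
    set A : Set (Fin m) := {j | (dualP P).l j ≤ v} with hA_def
    set Bs : Set (Fin m) := {j | u ≤ (dualP P).g j} with hBs_def
    have hmap : F '' (I ∩ W) ⊆ A ∩ Bs := by
      rintro j ⟨x, ⟨hxI, hxW⟩, rfl⟩
      obtain ⟨hf1, hf2⟩ := hFv x hxI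
      exact ⟨le_trans hf1 hxW.2, le_trans hxW.1 hf2⟩
    have hIWcard : (I ∩ W).ncard = (F '' (I ∩ W)).ncard :=
      (Set.ncard_image_of_injOn (hFinj.mono Set.inter_subset_left)).symm
    have hIWle : (I ∩ W).ncard ≤ (A ∩ Bs).ncard := by
      rw [hIWcard]
      exact Set.ncard_le_ncard hmap (Set.toFinite _)
    have hunion : A ∪ Bs = Set.univ := by
      ext j
      simp only [Set.mem_union, hA_def, hBs_def, Set.mem_setOf_eq, Set.mem_univ, iff_true]
      by_contra hcon
      push_neg at hcon
      have h1 := (dualP P).l_le_g j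
      omega
    have hIE : (A ∩ Bs).ncard + (A ∪ Bs).ncard = A.ncard + Bs.ncard :=
      Set.ncard_inter_add_ncard_union A Bs (Set.toFinite _) (Set.toFinite _)
    have hunivcard : (Set.univ : Set (Fin m)).ncard = m := by
      rw [Set.ncard_univ, Nat.card_eq_fintype_card, Fintype.card_fin]
    have hAcard : A.ncard = min (betaF P v) m := acnt_dual P v
    have hBscard : Bs.ncard = m - min (alphaF P (u - 1)) m := by
      have hcompl : Bs = {j : Fin m | (dualP P).g j ≤ u - 1}ᶜ := by
        ext j
        simp only [hBs_def, Set.mem_setOf_eq, Set.mem_compl_iff]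
        omega
      have h2 := Set.ncard_add_ncard_compl ({j : Fin m | (dualP P).g j ≤ u - 1} : Set (Fin m))
        (Set.toFinite _) (Set.toFinite _)
      have h3 : ({j : Fin m | (dualP P).g j ≤ u - 1} : Set (Fin m)).ncard
          = min (alphaF P (u - 1)) m := by
        have h4 := bcnt_dual P (u - 1)
        simp only [bcnt] at h4
        exact h4
      have h5 : Nat.card (Fin m) = m := by
        rw [Nat.card_eq_fintype_card, Fintype.card_fin]
      rw [hcompl]
      omega
    -- numeric facts
    have hbv : (i : ℕ) + 1 ≤ bcnt P v := by
      have hsub : ({j : Fin r | (j : ℕ) < i + 1} : Set (Fin r)) ⊆ {j | P.g j ≤ v} := by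
        intro j hj
        have hji : (j : ℕ) < i + 1 := hj
        have hle : j ≤ (⟨i, hi⟩ : Fin r) := Fin.le_def.mpr (by show (j : ℕ) ≤ i; omega)
        exact P.g_strictMono.monotone hle
      have := Set.ncard_le_ncard hsub (Set.toFinite _)
      rw [ncard_fin_lt, min_eq_left (show (i : ℕ) + 1 ≤ r by omega)] at this
      exact this
    have hacu : acnt P (u - 1) = i0 := by
      have hset : ({j : Fin r | P.l j ≤ u - 1} : Set (Fin r)) = {j : Fin r | (j : ℕ) < i0} := by
        ext j
        simp only [Set.mem_setOf_eq]
        constructor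
        · intro hj
          by_contra hcon
          push_neg at hcon
          have hle : (⟨i0, hi0r⟩ : Fin r) ≤ j := Fin.le_def.mpr (by show i0 ≤ (j : ℕ); omega)
          have : P.l ⟨i0, hi0r⟩ ≤ P.l j := P.l_strictMono.monotone hle
          omega
        · intro hj
          have hlt : j < (⟨i0, hi0r⟩ : Fin r) := Fin.lt_def.mpr (by show (j : ℕ) < i0; omega)
          have : P.l j < P.l ⟨i0, hi0r⟩ := P.l_strictMono hlt
          omega
      rw [acnt, hset, ncard_fin_lt]
      exact min_eq_left (by omega)
    have hui0 : i0 + 1 ≤ u := strictMono_fin_ge P.l_strictMono P.one_le_l ⟨i0, hi0r⟩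
    have hvle : v ≤ m + r := P.g_le _
    have hbetav : betaF P v ≤ m := betaF_le P hvle
    have halpha : alphaF P (u - 1) ≤ m := alphaF_le P (by omega)
    have hbetaeq : betaF P v = v - bcnt P v := rfl
    have halphaeq : alphaF P (u - 1) = (u - 1) - acnt P (u - 1) := rfl
    have hbcle : bcnt P v ≤ v := bcnt_le P v
    have hacle : acnt P (u - 1) ≤ u - 1 := acnt_le P (u - 1)
    have hmin1 : min (betaF P v) m = betaF P v := min_eq_left hbetav
    have hmin2 : min (alphaF P (u - 1)) m = alphaF P (u - 1) := min_eq_left halpha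
    rw [hunion, hunivcard] at hIE
    omega
  have main' : ∀ i, ∀ hi : i < r, b i ≤ P.g ⟨i, hi⟩ := by
    intro i
    induction i using Nat.strong_induction_on with
    | _ i ihs => exact fun hi => main i hi (fun i' hi' hlt => ihs i' hlt hi')
  refine ⟨Set.range (fun i : Fin r => b (i : ℕ)), ⟨fun i : Fin r => b (i : ℕ), ?_, rfl, ?_⟩, ?_⟩
  · intro a c hac
    exact grd_strictMono hI lo (by exact_mod_cast hac)
  · intro i
    constructor
    · have := grd_lo hI lo (i : ℕ)
      rwa [hlo_eq (i : ℕ) i.isLt, Fin.eta] at this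
    · have := main' (i : ℕ) i.isLt
      rwa [Fin.eta] at this
  · rw [Set.disjoint_left]
    rintro x ⟨i, rfl⟩
    exact grd_not_mem hI lo (i : ℕ)

end LPMAux

open LPM in
/-- The dual of the lattice path matroid of a presentation with
parameters `(m, r)` (with `m, r ≥ 1`) is the lattice path matroid of a
presentation with parameters `(r, m)`. -/
theorem stmt6 {m r : ℕ} (hm : 1 ≤ m) (hr : 1 ≤ r) (P : LPP m r)
    (M : Matroid ℕ) (hM : IsLPMOf P M) :
    ∃ P' : LPP r m, IsLPMOf P' M✶ := by
  classical
  obtain ⟨hE, hIndep⟩ := hM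
  have hM' : IsLPMOf P M := ⟨hE, hIndep⟩
  refine ⟨LPMAux.dualP P, ?_, ?_⟩
  · rw [Matroid.dual_ground, hE, Nat.add_comm m r]
  · intro I
    rw [Matroid.dual_indep_iff_exists']
    constructor
    · rintro ⟨hIE, B, hB, hdisj⟩
      have hIE' : I ⊆ Set.Icc 1 (m + r) := by rw [← hE]; exact hIE
      have hBfull : LPMAux.FullT P B := LPMAux.fullT_of_base hM' hr hB
      have hCfull := LPMAux.compl_fullT hBfull
      have hIC : I ⊆ Set.Icc 1 (m + r) \ B := by
        intro x hx
        exact ⟨hIE' hx, fun hxB => (Set.disjoint_left.mp hdisj hx) hxB⟩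
      refine ⟨by rw [Nat.add_comm r m]; exact hIE', ?_⟩
      exact LPMAux.isPT_mono (LPMAux.FullT.isPT hCfull) hIC
    · rintro ⟨hIE, hpt⟩
      have hIE' : I ⊆ Set.Icc 1 (m + r) := by rw [Nat.add_comm m r]; exact hIE
      obtain ⟨F, hFinj, hFv⟩ := LPMAux.isPT_total (by omega) hpt
      have hFv' : ∀ x ∈ I, (LPMAux.dualP P).l (F x) ≤ x ∧ x ≤ (LPMAux.dualP P).g (F x) := by
        intro x hx
        have := hFv x hx
        simpa [LPP.N, Set.mem_Icc] using this
      obtain ⟨B, hBfull, hdisj⟩ := LPMAux.greedy hr hIE' hFinj hFv'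
      exact ⟨by rw [← hE] at hIE'; exact hIE', B, LPMAux.base_of_fullT hM' hBfull, hdisj.symm⟩
end
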